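/- arXiv:1009.6022 — 7 statements merged into one kernel-verified Lean document; each statement's English description precedes it below -/
import Mathlib

section
/- If p = Σ_{i=0}^N c_i x^i is a real polynomial of degree N ≥ 3 with all c_i > 0 and c_i^2 ≥ 4 c_{i+1} c_{i-1} for all 1 ≤ i ≤ N−1, then all roots of p are real, simple, and negative. -/
open Polynomial
open Finset

lemma altsum (m : ℕ) : ∀ h : ℕ → ℝ,
    (∀ j, j + 1 ≤ m → 2 * h (j+1) ≤ h j) → (∀ j, j ≤ m → 0 ≤ h j) →
    h 0 / 2 ≤ ∑ j ∈ range (m+1), (-1:ℝ)^j * h j ∧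
      ∑ j ∈ range (m+1), (-1:ℝ)^j * h j ≤ h 0 := by
  induction m with
  | zero =>
    intro h _ h0
    rw [range_one, sum_singleton]
    constructor
    · simp only [pow_zero, one_mul]; linarith [h0 0 le_rfl]
    · simp [pow_zero]
  | succ m ih =>
    intro h hdec hpos
    have key : ∑ j ∈ range (m+1+1), (-1:ℝ)^j * h j
        = h 0 - ∑ j ∈ range (m+1), (-1:ℝ)^j * h (j+1) := by
      rw [Finset.sum_range_succ' (fun j => (-1:ℝ)^j * h j) (m+1)]
      have : ∀ j, (-1:ℝ)^(j+1) * h (j+1) = -((-1:ℝ)^j * h (j+1)) := by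
        intro j; rw [pow_succ]; ring
      rw [Finset.sum_congr rfl fun j _ => this j, Finset.sum_neg_distrib]
      simp; ring
    obtain ⟨l, u⟩ := ih (fun j => h (j+1)) (fun j hj => hdec (j+1) (by omega))
      (fun j hj => hpos (j+1) (by omega))
    rw [key]
    constructor
    · have := hdec 0 (by omega)
      linarith
    · have := hpos 1 (by omega)
      linarith

lemma ratio_anti (N : ℕ) (hN : 3 ≤ N) (c : ℕ → ℝ) (hpos : ∀ i ≤ N, 0 < c i)
    (hβ : ∀ i, 1 ≤ i → i ≤ N - 1 → 4 * (c (i + 1) * c (i - 1)) ≤ (c i) ^ 2) :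
    ∀ a b, a ≤ b → b ≤ N - 1 → c (b+1) * c a ≤ c b * c (a+1) := by
  intro a b hab
  induction b, hab using Nat.le_induction with
  | base => intro _; rw [mul_comm]
  | succ b hab ih =>
    intro hbN
    have ih' := ih (by omega)
    have hb2 : 4 * (c (b+2) * c b) ≤ c (b+1) ^ 2 := by
      have := hβ (b+1) (by omega) (by omega)
      simpa using this
    have p0 : 0 < c a := hpos a (by omega)
    have p1 : 0 < c (a+1) := hpos (a+1) (by omega)
    have p2 : 0 < c b := hpos b (by omega)
    have p3 : 0 < c (b+1) := hpos (b+1) (by omega)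
    have p4 : 0 < c (b+2) := hpos (b+2) (by omega)
    have hA : (4 * (c (b+2) * c b)) * (c (b+1) * c a) ≤ c (b+1)^2 * (c b * c (a+1)) :=
      mul_le_mul hb2 ih' (by positivity) (by positivity)
    have h4 : 4 * (c (b+2) * c a) ≤ c (b+1) * c (a+1) := by
      have hcb : 0 < c b * c (b+1) := by positivity
      have : (4 * (c (b+2) * c a)) * (c b * c (b+1)) ≤ (c (b+1) * c (a+1)) * (c b * c (b+1)) := by
        nlinarith [hA]
      exact le_of_mul_le_mul_right this hcb
    nlinarith [mul_pos p4 p0]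

lemma negpow_congr {a b : ℕ} (h : a % 2 = b % 2) : (-1:ℝ)^a = (-1)^b := by
  conv_lhs => rw [← Nat.div_add_mod a 2]
  conv_rhs => rw [← Nat.div_add_mod b 2]
  rw [pow_add, pow_add, pow_mul, pow_mul, neg_one_sq, one_pow, one_pow, h]

lemma my_le_of_sq_le_sq {a b : ℝ} (ha : 0 ≤ a) (hb : 0 ≤ b) (h : a^2 ≤ b^2) : a ≤ b := by
  nlinarith [sq_nonneg (a - b), sq_nonneg (a + b)]

lemma sign_mid (N : ℕ) (hN : 3 ≤ N) (c : ℕ → ℝ) (hpos : ∀ i ≤ N, 0 < c i)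
    (hβ : ∀ i, 1 ≤ i → i ≤ N - 1 → 4 * (c (i + 1) * c (i - 1)) ≤ (c i) ^ 2)
    (j : ℕ) (hj : j + 2 ≤ N) :
    0 < ∑ i ∈ range (N+1), (-1:ℝ)^(j+1+i) * (c i * (Real.sqrt (c j / c (j+2)))^i) := by
  have M := ratio_anti N hN c hpos hβ
  set y := Real.sqrt (c j / c (j+2)) with hydef
  have pj : 0 < c j := hpos j (by omega)
  have pj1 : 0 < c (j+1) := hpos (j+1) (by omega)
  have pj2 : 0 < c (j+2) := hpos (j+2) (by omega)
  have hy : 0 < y := Real.sqrt_pos.2 (div_pos pj pj2)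
  have hy2 : y^2 = c j / c (j+2) := Real.sq_sqrt (le_of_lt (div_pos pj pj2))
  have hβ1 : 4 * (c (j+2) * c j) ≤ c (j+1) ^ 2 := by
    have := hβ (j+1) (by omega) (by omega); simpa using this
  -- F1 : 2 * c j ≤ c (j+1) * y
  have F1 : 2 * c j ≤ c (j+1) * y := by
    apply my_le_of_sq_le_sq (by positivity) (by positivity)
    have key : (c (j+1) * y)^2 * c (j+2) = c (j+1)^2 * c j := by
      rw [mul_pow, hy2]; field_simp
    apply le_of_mul_le_mul_right _ pj2
    rw [key]
    nlinarith [mul_le_mul_of_nonneg_right hβ1 (le_of_lt pj)]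
  -- F2 : 2 * (c (j+2) * y) ≤ c (j+1)
  have F2 : 2 * (c (j+2) * y) ≤ c (j+1) := by
    apply my_le_of_sq_le_sq (by positivity) (by positivity)
    have key : (2 * (c (j+2) * y))^2 * c (j+2) = 4 * c (j+2)^2 * c j := by
      rw [mul_pow, mul_pow, hy2]; field_simp; ring
    apply le_of_mul_le_mul_right _ pj2
    rw [key]
    nlinarith [mul_le_mul_of_nonneg_right hβ1 (le_of_lt pj2)]
  -- upper ratios
  have hupg : ∀ i, j+1 ≤ i → i ≤ N-1 →
      2 * (c (i+1) * y^(i+1)) ≤ c i * y^i := by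
    intro i hi1 hi2
    have hM := M (j+1) i hi1 (by omega)
    have hcy : 2 * (c (i+1) * y) ≤ c i := by
      have h1 : 2 * (c (i+1) * y) * c (j+1) ≤ c i * c (j+1) := by
        calc 2 * (c (i+1) * y) * c (j+1) = (c (i+1) * c (j+1)) * (2 * y) := by ring
          _ ≤ (c i * c (j+2)) * (2 * y) := by
              apply mul_le_mul_of_nonneg_right hM (by positivity)
          _ = c i * (2 * (c (j+2) * y)) := by ring
          _ ≤ c i * c (j+1) := by
              apply mul_le_mul_of_nonneg_left F2 (le_of_lt (hpos i (by omega)))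
      exact le_of_mul_le_mul_right h1 pj1
    have hyp : (0:ℝ) < y^i := pow_pos hy i
    calc 2 * (c (i+1) * y^(i+1)) = (2 * (c (i+1) * y)) * y^i := by rw [pow_succ]; ring
      _ ≤ c i * y^i := mul_le_mul_of_nonneg_right hcy (le_of_lt hyp)
  -- lower ratios
  have hdowng : ∀ i, i+1 ≤ j → 2 * (c i * y^i) ≤ c (i+1) * y^(i+1) := by
    intro i hi
    have hM := M i j (by omega) (by omega)
    have hcy : 2 * c i ≤ c (i+1) * y := by
      have h1 : 2 * c i * c (j+1) ≤ c (i+1) * y * c (j+1) := by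
        calc 2 * c i * c (j+1) = (c (j+1) * c i) * 2 := by ring
          _ ≤ (c j * c (i+1)) * 2 := by
              apply mul_le_mul_of_nonneg_right hM (by norm_num)
          _ = c (i+1) * (2 * c j) := by ring
          _ ≤ c (i+1) * (c (j+1) * y) := by
              apply mul_le_mul_of_nonneg_left F1 (le_of_lt (hpos (i+1) (by omega)))
          _ = c (i+1) * y * c (j+1) := by ring
      exact le_of_mul_le_mul_right h1 pj1
    have hyp : (0:ℝ) < y^i := pow_pos hy i
    calc 2 * (c i * y^i) = (2 * c i) * y^i := by ring
      _ ≤ (c (i+1) * y) * y^i := mul_le_mul_of_nonneg_right hcy (le_of_lt hyp)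
      _ = c (i+1) * y^(i+1) := by rw [pow_succ]; ring
  -- middle inequality
  have hmid : c (j+2) * y^(j+2) + c j * y^j ≤ c (j+1) * y^(j+1) := by
    have h1 : 2 * (c (j+2) * y^(j+2)) ≤ c (j+1) * y^(j+1) := by
      calc 2 * (c (j+2) * y^(j+2)) = (2 * (c (j+2) * y)) * y^(j+1) := by
            rw [pow_succ]; ring
        _ ≤ c (j+1) * y^(j+1) :=
            mul_le_mul_of_nonneg_right F2 (le_of_lt (pow_pos hy (j+1)))
    have h2 : 2 * (c j * y^j) ≤ c (j+1) * y^(j+1) := by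
      calc 2 * (c j * y^j) = (2 * c j) * y^j := by ring
        _ ≤ (c (j+1) * y) * y^j :=
            mul_le_mul_of_nonneg_right F1 (le_of_lt (pow_pos hy j))
        _ = c (j+1) * y^(j+1) := by rw [pow_succ]; ring
    linarith
  -- split the sum
  have e1 : j+3 ≤ N+1 := by omega
  rw [← Finset.sum_range_add_sum_Ico _ e1, Finset.sum_Ico_eq_sum_range]
  rw [sum_range_succ, sum_range_succ, sum_range_succ]
  have s1 : (-1:ℝ)^(j+1+j) = -1 := Odd.neg_one_pow ⟨j, by omega⟩
  have s2 : (-1:ℝ)^(j+1+(j+1)) = 1 := Even.neg_one_pow ⟨j+1, by omega⟩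
  have s3 : (-1:ℝ)^(j+1+(j+2)) = -1 := Odd.neg_one_pow ⟨j+1, by omega⟩
  rw [s1, s2, s3]
  -- lower tail bounds
  have hA : 0 ≤ ∑ i ∈ range j, (-1:ℝ)^(j+1+i) * (c i * y^i) ∧
      (1 ≤ j → c (j-1) * y^(j-1) / 2 ≤ ∑ i ∈ range j, (-1:ℝ)^(j+1+i) * (c i * y^i)) := by
    match j, hj, hdowng with
    | 0, _, _ => simp
    | (m+1), hj, hdowng =>
      have hrefl := Finset.sum_range_reflect
        (fun i => (-1:ℝ)^(m+1+1+i) * (c i * y^i)) (m+1)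
      have hcongr : ∑ t ∈ range (m+1),
          (-1:ℝ)^(m+1+1+(m+1-1-t)) * (c (m+1-1-t) * y^(m+1-1-t))
          = ∑ t ∈ range (m+1), (-1:ℝ)^t * (c (m-t) * y^(m-t)) := by
        apply Finset.sum_congr rfl
        intro t ht
        have ht' : t ≤ m := by
          have := Finset.mem_range.1 ht; omega
        have he : m+1-1-t = m-t := by omega
        have hs : (-1:ℝ)^(m+1+1+(m-t)) = (-1:ℝ)^t := negpow_congr (by omega)
        rw [he, hs]
      have cond1 : ∀ t, t + 1 ≤ m →
          2 * (c (m-(t+1)) * y^(m-(t+1))) ≤ c (m-t) * y^(m-t) := by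
        intro t htm
        obtain ⟨i, hi⟩ : ∃ i, m - t = i + 1 := ⟨m - t - 1, by omega⟩
        have h2 : m - (t+1) = i := by omega
        rw [hi, h2]
        exact hdowng i (by omega)
      have cond2 : ∀ t, t ≤ m → 0 ≤ c (m-t) * y^(m-t) := by
        intro t _
        exact le_of_lt (mul_pos (hpos (m-t) (by omega)) (pow_pos hy _))
      have halt := altsum m (fun t => c (m-t) * y^(m-t)) cond1 cond2
      simp only [Nat.sub_zero] at halt
      have hAe : ∑ i ∈ range (m+1), (-1:ℝ)^(m+1+1+i) * (c i * y^i)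
          = ∑ t ∈ range (m+1), (-1:ℝ)^t * (c (m-t) * y^(m-t)) := by
        rw [← hrefl]; exact hcongr
      rw [hAe]
      constructor
      · have h0 : 0 ≤ c m * y^m := cond2 0 (by omega) |>.trans_eq (by simp)
        have h0' : 0 ≤ c m * y^m := by
          exact le_of_lt (mul_pos (hpos m (by omega)) (pow_pos hy _))
        linarith [halt.1]
      · intro _
        have he : m + 1 - 1 = m := by omega
        rw [he]
        exact halt.1
  -- upper tail bounds
  have hU : 0 ≤ ∑ t ∈ range (N+1-(j+3)), (-1:ℝ)^(j+1+(j+3+t)) * (c (j+3+t) * y^(j+3+t)) ∧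
      (j+3 ≤ N → c (j+3) * y^(j+3) / 2 ≤
        ∑ t ∈ range (N+1-(j+3)), (-1:ℝ)^(j+1+(j+3+t)) * (c (j+3+t) * y^(j+3+t))) := by
    have hUc : ∑ t ∈ range (N+1-(j+3)), (-1:ℝ)^(j+1+(j+3+t)) * (c (j+3+t) * y^(j+3+t))
        = ∑ t ∈ range (N+1-(j+3)), (-1:ℝ)^t * (c (j+3+t) * y^(j+3+t)) := by
      apply Finset.sum_congr rfl
      intro t _
      rw [negpow_congr (a := j+1+(j+3+t)) (b := t) (by omega)]
    rw [hUc]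
    rcases Nat.lt_or_ge N (j+3) with hlt | hge
    · have : N+1-(j+3) = 0 := by omega
      rw [this]
      simp only [range_zero, sum_empty]
      exact ⟨le_refl 0, fun h => absurd h (by omega)⟩
    · have hm : N+1-(j+3) = (N-(j+3))+1 := by omega
      rw [hm]
      have cond1 : ∀ t, t + 1 ≤ N-(j+3) →
          2 * (c (j+3+(t+1)) * y^(j+3+(t+1))) ≤ c (j+3+t) * y^(j+3+t) := by
        intro t htm
        rw [show j+3+(t+1) = (j+3+t)+1 from by omega]
        exact hupg (j+3+t) (by omega) (by omega)
      have cond2 : ∀ t, t ≤ N-(j+3) → 0 ≤ c (j+3+t) * y^(j+3+t) := by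
        intro t htm
        exact le_of_lt (mul_pos (hpos (j+3+t) (by omega)) (pow_pos hy _))
      have halt := altsum (N-(j+3)) (fun t => c (j+3+t) * y^(j+3+t)) cond1 cond2
      simp only [Nat.add_zero] at halt
      have h0 : 0 ≤ c (j+3) * y^(j+3) :=
        le_of_lt (mul_pos (hpos (j+3) (by omega)) (pow_pos hy _))
      exact ⟨by linarith [halt.1], fun _ => halt.1⟩
  -- conclude
  rcases Nat.lt_or_ge N (j+3) with hlt | hge
  · have hN2 : N = j + 2 := by omega
    have hj1 : 1 ≤ j := by omega
    have hApos : 0 < c (j-1) * y^(j-1) / 2 := by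
      have := mul_pos (hpos (j-1) (by omega)) (pow_pos hy (j-1))
      linarith
    linarith [hA.2 hj1, hU.1, hmid, hApos]
  · have hUpos : 0 < c (j+3) * y^(j+3) / 2 := by
      have := mul_pos (hpos (j+3) (by omega)) (pow_pos hy (j+3))
      linarith
    linarith [hA.1, hU.2 hge, hmid, hUpos]

lemma sign_top (N : ℕ) (hN : 3 ≤ N) (c : ℕ → ℝ) (hpos : ∀ i ≤ N, 0 < c i)
    (hβ : ∀ i, 1 ≤ i → i ≤ N - 1 → 4 * (c (i + 1) * c (i - 1)) ≤ (c i) ^ 2) :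
    0 < ∑ i ∈ range (N+1), (-1:ℝ)^(N+i) * (c i * (2 * c (N-1) / c N)^i) := by
  have M := ratio_anti N hN c hpos hβ
  obtain ⟨m, hm⟩ : ∃ m, N = m + 1 := ⟨N - 1, by omega⟩
  subst hm
  set y := 2 * c (m+1-1) / c (m+1) with hydef
  have pN : 0 < c (m+1) := hpos (m+1) (by omega)
  have pN1 : 0 < c m := hpos m (by omega)
  have hy : 0 < y := by
    rw [hydef]
    have : (m+1-1) = m := by omega
    rw [this]
    positivity
  have hyc : c (m+1) * y = 2 * c m := by
    rw [hydef, show m+1-1 = m from by omega]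
    field_simp
  -- downward ratio estimates
  have hdowng : ∀ i, i + 1 ≤ m → 2 * (c i * y^i) ≤ c (i+1) * y^(i+1) := by
    intro i hi
    have hM := M i m (by omega) (by omega)
    have hcy : 2 * c i ≤ c (i+1) * y := by
      have h1 : 2 * c i * c (m+1) ≤ c (i+1) * y * c (m+1) := by
        have hyN : c (i+1) * y * c (m+1) = 2 * (c m * c (i+1)) := by
          rw [hydef, show m+1-1 = m from by omega]
          field_simp
        rw [hyN]
        nlinarith [hM]
      exact le_of_mul_le_mul_right h1 pN
    calc 2 * (c i * y^i) = (2 * c i) * y^i := by ring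
      _ ≤ (c (i+1) * y) * y^i := mul_le_mul_of_nonneg_right hcy (le_of_lt (pow_pos hy i))
      _ = c (i+1) * y^(i+1) := by rw [pow_succ]; ring
  rw [sum_range_succ]
  have sN : (-1:ℝ)^(m+1+(m+1)) = 1 := Even.neg_one_pow ⟨m+1, by omega⟩
  rw [sN, one_mul]
  -- the prefix sum equals minus an alternating sum
  have hrefl := (Finset.sum_range_reflect
      (fun i => (-1:ℝ)^(m+1+i) * (c i * y^i)) (m+1)).symm
  have hcongr : ∑ t ∈ range (m+1),
      (-1:ℝ)^(m+1+(m+1-1-t)) * (c (m+1-1-t) * y^(m+1-1-t))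
      = -∑ t ∈ range (m+1), (-1:ℝ)^t * (c (m-t) * y^(m-t)) := by
    rw [← Finset.sum_neg_distrib]
    apply Finset.sum_congr rfl
    intro t ht
    have ht' : t ≤ m := by have := Finset.mem_range.1 ht; omega
    have he : m+1-1-t = m-t := by omega
    have hs : (-1:ℝ)^(m+1+(m-t)) = (-1:ℝ)^(t+1) := negpow_congr (by omega)
    rw [he, hs, pow_succ]
    ring
  have cond1 : ∀ t, t + 1 ≤ m →
      2 * (c (m-(t+1)) * y^(m-(t+1))) ≤ c (m-t) * y^(m-t) := by
    intro t htm
    obtain ⟨i, hi⟩ : ∃ i, m - t = i + 1 := ⟨m - t - 1, by omega⟩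
    have h2 : m - (t+1) = i := by omega
    rw [hi, h2]
    exact hdowng i (by omega)
  have cond2 : ∀ t, t ≤ m → 0 ≤ c (m-t) * y^(m-t) := by
    intro t _
    exact le_of_lt (mul_pos (hpos (m-t) (by omega)) (pow_pos hy _))
  have halt := altsum m (fun t => c (m-t) * y^(m-t)) cond1 cond2
  simp only [Nat.sub_zero] at halt
  have key : ∑ i ∈ range (m+1), (-1:ℝ)^(m+1+i) * (c i * y^i)
      = -∑ t ∈ range (m+1), (-1:ℝ)^t * (c (m-t) * y^(m-t)) := by
    rw [hrefl]; exact hcongr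
  rw [key]
  have hgN : c (m+1) * y^(m+1) = 2 * (c m * y^m) := by
    rw [pow_succ]
    calc c (m+1) * (y^m * y) = (c (m+1) * y) * y^m := by ring
      _ = 2 * c m * y^m := by rw [hyc]
      _ = 2 * (c m * y^m) := by ring
  have hpos0 : 0 < c m * y^m := mul_pos pN1 (pow_pos hy m)
  linarith [halt.2]

lemma real_roots_spec (N : ℕ) (hN : 3 ≤ N) (c : ℕ → ℝ) (hpos : ∀ i ≤ N, 0 < c i)
    (hβ : ∀ i, 1 ≤ i → i ≤ N - 1 → 4 * (c (i + 1) * c (i - 1)) ≤ (c i) ^ 2) :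
    (∑ i ∈ range (N+1), C (c i) * X^i : ℝ[X]) ≠ 0 ∧
    (∑ i ∈ range (N+1), C (c i) * X^i : ℝ[X]).natDegree = N ∧
    Multiset.card (∑ i ∈ range (N+1), C (c i) * X^i : ℝ[X]).roots = N ∧
    (∀ α ∈ (∑ i ∈ range (N+1), C (c i) * X^i : ℝ[X]).roots,
      α < 0 ∧ (∑ i ∈ range (N+1), C (c i) * X^i : ℝ[X]).roots.count α = 1) := by
  set q : ℝ[X] := ∑ i ∈ range (N+1), C (c i) * X^i with hq
  have hcoeff : ∀ n, q.coeff n = if n ≤ N then c n else 0 := by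
    intro n
    rw [hq, finset_sum_coeff]
    simp only [coeff_C_mul, coeff_X_pow, mul_ite, mul_one, mul_zero]
    rw [Finset.sum_ite_eq (range (N+1)) n c]
    simp [Nat.lt_succ_iff]
  have hq0 : q ≠ 0 := by
    intro h
    have := hcoeff N
    rw [h] at this
    simp at this
    exact absurd this.symm (hpos N le_rfl).ne'
  have hdeg : q.natDegree = N := by
    apply le_antisymm
    · rw [natDegree_le_iff_coeff_eq_zero]
      intro m hm
      rw [hcoeff m, if_neg (by omega)]
    · apply le_natDegree_of_ne_zero
      rw [hcoeff N, if_pos le_rfl]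
      exact ne_of_gt (hpos N le_rfl)
  have heval : ∀ t : ℝ, q.eval t = ∑ i ∈ range (N+1), c i * t^i := by
    intro t
    rw [hq, eval_finset_sum]
    simp
  -- test points
  set Xp : ℕ → ℝ := fun k =>
    if k = 0 then 0 else if k + 1 ≤ N then -Real.sqrt (c (k-1) / c (k+1))
      else -(2 * c (N-1) / c N) with hXp
  -- sign alternation
  have hsign : ∀ k ≤ N, 0 < (-1:ℝ)^k * q.eval (Xp k) := by
    intro k hkN
    rcases Nat.eq_zero_or_pos k with rfl | hk1
    · have : Xp 0 = 0 := by simp [hXp]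
      rw [this, heval, pow_zero, one_mul]
      rw [Finset.sum_eq_single_of_mem 0 (Finset.mem_range.2 (by omega))]
      · simpa using hpos 0 (by omega)
      · intro i _ hi
        rw [zero_pow hi, mul_zero]
    rcases Nat.lt_or_ge k N with hkN' | hkN'
    · -- 1 ≤ k ≤ N-1
      obtain ⟨j, rfl⟩ : ∃ j, k = j + 1 := ⟨k - 1, by omega⟩
      have hne1 : ¬ (j + 1 = 0) := by omega
      have hle2 : j + 1 + 1 ≤ N := by omega
      have e1 : j + 1 - 1 = j := by omega
      have e2 : j + 1 + 1 = j + 2 := by omega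
      have hXpk : Xp (j+1) = -Real.sqrt (c j / c (j+2)) := by
        simp only [hXp]
        rw [if_neg hne1, if_pos hle2, e1, e2]
      rw [hXpk, heval, Finset.mul_sum]
      have hc : ∀ i ∈ range (N+1), (-1:ℝ)^(j+1) * (c i * (-Real.sqrt (c j / c (j+2)))^i)
          = (-1:ℝ)^(j+1+i) * (c i * (Real.sqrt (c j / c (j+2)))^i) := by
        intro i _
        rw [neg_pow, pow_add]
        ring
      rw [Finset.sum_congr rfl hc]
      exact sign_mid N hN c hpos hβ j (by omega)
    · -- k = N
      have hkN'' : k = N := by omega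
      subst hkN''
      have hne1 : ¬ (k = 0) := by omega
      have hne2 : ¬ (k + 1 ≤ k) := by omega
      have hXpk : Xp k = -(2 * c (k-1) / c k) := by
        simp only [hXp]
        rw [if_neg hne1, if_neg hne2]
      rw [hXpk, heval, Finset.mul_sum]
      have hc : ∀ i ∈ range (k+1), (-1:ℝ)^k * (c i * (-(2 * c (k-1) / c k))^i)
          = (-1:ℝ)^(k+i) * (c i * (2 * c (k-1) / c k)^i) := by
        intro i _
        rw [show (-(2 * c (k-1) / c k)) = (-1) * (2 * c (k-1) / c k) from by ring,
          mul_pow, pow_add]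
        ring
      rw [Finset.sum_congr rfl hc]
      exact sign_top k hN c hpos hβ
  -- strict decrease of test points
  have hX0 : Xp 0 = 0 := by simp [hXp]
  have hXdec : ∀ k, k + 1 ≤ N → Xp (k+1) < Xp k := by
    intro k hk
    rcases Nat.eq_zero_or_pos k with rfl | hk1
    · have hX1 : Xp 1 = -Real.sqrt (c 0 / c 2) := by
        have h2 : 1 + 1 ≤ N := by omega
        simp only [hXp]
        rw [if_neg (by omega), if_pos h2]
      rw [hX0, hX1]
      have : 0 < Real.sqrt (c 0 / c 2) :=
        Real.sqrt_pos.2 (div_pos (hpos 0 (by omega)) (hpos 2 (by omega)))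
      linarith
    rcases Nat.lt_or_ge (k+1) N with hk2 | hk2
    · -- middle case
      obtain ⟨j, rfl⟩ : ∃ j, k = j + 1 := ⟨k - 1, by omega⟩
      have hXa : Xp (j+1) = -Real.sqrt (c j / c (j+2)) := by
        simp only [hXp]
        rw [if_neg (by omega), if_pos (by omega : j+1+1 ≤ N),
          (by omega : j+1-1 = j), (by omega : j+1+1 = j+2)]
      have hXb : Xp (j+1+1) = -Real.sqrt (c (j+1) / c (j+3)) := by
        simp only [hXp]
        rw [if_neg (by omega), if_pos (by omega : j+1+1+1 ≤ N),
          (by omega : j+1+1-1 = j+1), (by omega : j+1+1+1 = j+3)]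
      rw [hXa, hXb, neg_lt_neg_iff]
      apply Real.sqrt_lt_sqrt
        (le_of_lt (div_pos (hpos j (by omega)) (hpos (j+2) (by omega))))
      rw [div_lt_div_iff₀ (hpos (j+2) (by omega)) (hpos (j+3) (by omega))]
      have p0 : 0 < c j := hpos j (by omega)
      have p1 : 0 < c (j+1) := hpos (j+1) (by omega)
      have p2 : 0 < c (j+2) := hpos (j+2) (by omega)
      have p3 : 0 < c (j+3) := hpos (j+3) (by omega)
      have hb1 : 4 * (c (j+2) * c j) ≤ c (j+1) ^ 2 := by
        have := hβ (j+1) (by omega) (by omega); simpa using this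
      have hb2 : 4 * (c (j+3) * c (j+1)) ≤ c (j+2) ^ 2 := by
        have := hβ (j+2) (by omega) (by omega)
        rw [(by omega : j+2-1 = j+1), (by omega : j+2+1 = j+3)] at this
        exact this
      nlinarith [mul_pos p1 p2, mul_pos p0 p3,
        mul_le_mul hb1 hb2 (by positivity) (by positivity)]
    · -- k + 1 = N
      have hkN : k + 1 = N := by omega
      obtain ⟨j, rfl⟩ : ∃ j, k = j + 1 := ⟨k - 1, by omega⟩
      have hNj : N = j + 2 := by omega
      have hXa : Xp (j+1) = -Real.sqrt (c j / c (j+2)) := by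
        simp only [hXp]
        rw [if_neg (by omega), if_pos (by omega : j+1+1 ≤ N),
          (by omega : j+1-1 = j), (by omega : j+1+1 = j+2)]
      have hXb : Xp (j+1+1) = -(2 * c (N-1) / c N) := by
        simp only [hXp]
        rw [if_neg (by omega), if_neg (by omega : ¬ (j+1+1+1 ≤ N))]
      rw [hXa, hXb, neg_lt_neg_iff, hNj, (by omega : j+2-1 = j+1)]
      have hc2 : 0 < c (j+2) := hpos (j+2) (by omega)
      have hc1 : 0 < c (j+1) := hpos (j+1) (by omega)
      have hc0 : 0 < c j := hpos j (by omega)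
      rw [show (2:ℝ) * c (j+1) / c (j+2) = (2 * c (j+1)) / c (j+2) from by ring]
      rw [Real.sqrt_lt' (by positivity)]
      rw [div_pow, div_lt_div_iff₀ hc2 (by positivity)]
      have hb1 : 4 * (c (j+2) * c j) ≤ c (j+1) ^ 2 := by
        have := hβ (j+1) (by omega) (by omega); simpa using this
      nlinarith [sq_nonneg (c (j+2)), mul_pos hc2 hc2,
        mul_le_mul_of_nonneg_right hb1 (le_of_lt hc2)]
  have hXanti : ∀ a b, a ≤ b → b ≤ N → Xp b ≤ Xp a := by
    intro a b hab
    induction b, hab using Nat.le_induction with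
    | base => intro _; exact le_rfl
    | succ b hab ih =>
      intro h
      exact le_trans (le_of_lt (hXdec b (by omega))) (ih (by omega))
  -- roots via IVT
  have hroot : ∀ k : Fin N, ∃ ρ, ρ ∈ Set.Ioo (Xp (k.1+1)) (Xp k.1) ∧ q.IsRoot ρ := by
    intro k
    have hk : k.1 + 1 ≤ N := k.2
    have h1 := hsign k.1 (by omega)
    have h2 := hsign (k.1+1) hk
    have hlt : Xp (k.1+1) < Xp k.1 := hXdec k.1 hk
    have hfc : ContinuousOn (fun t => (-1:ℝ)^k.1 * q.eval t)
        (Set.Icc (Xp (k.1+1)) (Xp k.1)) :=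
      (continuous_const.mul q.continuous).continuousOn
    have h0mem : (0:ℝ) ∈ Set.Ioo ((fun t => (-1:ℝ)^k.1 * q.eval t) (Xp (k.1+1)))
        ((fun t => (-1:ℝ)^k.1 * q.eval t) (Xp k.1)) := by
      constructor
      · show (-1:ℝ)^k.1 * q.eval (Xp (k.1+1)) < 0
        have he : (-1:ℝ)^k.1 * q.eval (Xp (k.1+1))
            = -((-1:ℝ)^(k.1+1) * q.eval (Xp (k.1+1))) := by
          rw [pow_succ]; ring
        rw [he]; linarith
      · exact h1
    obtain ⟨r, hrI, hr⟩ := intermediate_value_Ioo hlt.le hfc h0mem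
    refine ⟨r, hrI, ?_⟩
    have hne : (-1:ℝ)^k.1 ≠ 0 := pow_ne_zero _ (by norm_num)
    have : (-1:ℝ)^k.1 * q.eval r = 0 := hr
    rcases mul_eq_zero.1 this with h | h
    · exact absurd h hne
    · exact h
  choose ρ hρI hρ0 using hroot
  have hρlt : ∀ k : Fin N, ρ k < Xp k.1 := fun k => (hρI k).2
  have hρgt : ∀ k : Fin N, Xp (k.1+1) < ρ k := fun k => (hρI k).1
  have horder : ∀ a b : Fin N, a < b → ρ b < ρ a := by
    intro a b hab
    have hab' : a.1 + 1 ≤ b.1 := hab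
    calc ρ b < Xp b.1 := hρlt b
      _ ≤ Xp (a.1+1) := hXanti (a.1+1) b.1 hab' (le_of_lt b.2)
      _ < ρ a := hρgt a
  have hinj : Function.Injective ρ := by
    intro a b hab
    rcases lt_trichotomy a b with h|h|h
    · have := horder a b h; rw [hab] at this; exact absurd this (lt_irrefl _)
    · exact h
    · have := horder b a h; rw [hab] at this; exact absurd this (lt_irrefl _)
  have hρneg : ∀ k : Fin N, ρ k < 0 := by
    intro k
    have h1 : Xp k.1 ≤ Xp 0 := hXanti 0 k.1 (Nat.zero_le _) (le_of_lt k.2)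
    rw [hX0] at h1
    linarith [hρlt k]
  set md : Multiset ℝ := Multiset.map ρ Finset.univ.val with hmd
  have hnd : md.Nodup := Multiset.Nodup.map hinj Finset.univ.nodup
  have hcardmd : Multiset.card md = N := by simp [hmd]
  have hsub : md ≤ q.roots := by
    rw [Multiset.le_iff_count]
    intro a
    by_cases hma : a ∈ md
    · rw [Multiset.count_eq_one_of_mem hnd hma]
      obtain ⟨k, _, rfl⟩ := Multiset.mem_map.1 hma
      exact Multiset.one_le_count_iff_mem.2 ((mem_roots hq0).2 (hρ0 k))
    · rw [Multiset.count_eq_zero_of_notMem hma]; exact Nat.zero_le _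
  have hEq : md = q.roots := by
    apply Multiset.eq_of_le_of_card_le hsub
    rw [hcardmd]
    calc Multiset.card q.roots ≤ q.natDegree := q.card_roots'
      _ = N := hdeg
  refine ⟨hq0, hdeg, ?_, ?_⟩
  · rw [← hEq, hcardmd]
  · intro α hα
    rw [← hEq] at hα ⊢
    obtain ⟨k, hk, rfl⟩ := Multiset.mem_map.1 hα
    exact ⟨hρneg k, Multiset.count_eq_one_of_mem hnd hα⟩

theorem stmt_0 (N : ℕ) (hN : 3 ≤ N) (c : ℕ → ℝ)
    (hpos : ∀ i ≤ N, 0 < c i)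
    (hβ : ∀ i, 1 ≤ i → i ≤ N - 1 → 4 * (c (i + 1) * c (i - 1)) ≤ (c i) ^ 2) :
    ∀ z : ℂ,
      (∑ i ∈ Finset.range (N + 1), C ((c i : ℂ)) * X ^ i).IsRoot z →
      z.im = 0 ∧ z.re < 0 ∧
        (∑ i ∈ Finset.range (N + 1), C ((c i : ℂ)) * X ^ i).rootMultiplicity z = 1 := by
  obtain ⟨hq0, hdeg, hcard, hspec⟩ := real_roots_spec N hN c hpos hβ
  set q : ℝ[X] := ∑ i ∈ range (N+1), C (c i) * X^i with hq
  set P : ℂ[X] := ∑ i ∈ Finset.range (N + 1), C ((c i : ℂ)) * X ^ i with hP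
  have hmap : P = q.map (algebraMap ℝ ℂ) := by
    rw [hP, hq, Polynomial.map_sum]
    apply Finset.sum_congr rfl
    intro i _
    rw [Polynomial.map_mul, Polynomial.map_pow, Polynomial.map_C, Polynomial.map_X]
    norm_num
  have hinj : Function.Injective (algebraMap ℝ ℂ) := (algebraMap ℝ ℂ).injective
  have hP0 : P ≠ 0 := by
    rw [hmap]
    exact (Polynomial.map_ne_zero_iff hinj).2 hq0
  have hroots : P.roots = q.roots.map (algebraMap ℝ ℂ) := by
    rw [hmap]
    exact (roots_map_of_injective_of_card_eq_natDegree hinj (by rw [hcard, hdeg])).symm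
  intro z hz
  have hzmem : z ∈ P.roots := (mem_roots hP0).2 hz
  rw [hroots] at hzmem
  obtain ⟨α, hαmem, hαz⟩ := Multiset.mem_map.1 hzmem
  obtain ⟨hαneg, hαcount⟩ := hspec α hαmem
  have him : z.im = 0 := by rw [← hαz]; simp
  have hre : z.re < 0 := by rw [← hαz]; simpa using hαneg
  refine ⟨him, hre, ?_⟩
  rw [← Polynomial.count_roots, hroots, ← hαz]
  rw [Multiset.count_map_eq_count' _ _ hinj]
  exact hαcount
end

section
/- Let (D_j)_{j≥k} be a sequence of positive reals with D_{k+1} ≤ D_k and D_j^2/(D_{j+1}D_{j-1}) ≥ β for all j > k, where β > 1. Then for all l ≥ k, D_l ≤ r^{l-k} β^{-(l-k)(l-k-1)/2} D_k where r = D_{k+1}/D_k, and consequently Σ_{j≥k} D_j ≤ F(r,β) D_k where F(r,β) = Σ_{m=0}^∞ r^m / β^{m(m-1)/2}. -/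
theorem stmt_2 (k : ℕ) (D : ℕ → ℝ) (β : ℝ) (hβ : 1 < β)
    (hpos : ∀ j, k ≤ j → 0 < D j) (hdec : D (k + 1) ≤ D k)
    (hratio : ∀ j, k < j → β * (D (j + 1) * D (j - 1)) ≤ (D j) ^ 2) :
    (∀ l, k ≤ l →
      D l ≤ (D (k + 1) / D k) ^ (l - k) / β ^ ((l - k) * (l - k - 1) / 2) * D k) ∧
    (∑' m : ℕ, D (k + m)) ≤
      (∑' m : ℕ, (D (k + 1) / D k) ^ m / β ^ (m * (m - 1) / 2)) * D k := by
  have hb0 : (0:ℝ) < β := lt_trans one_pos hβ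
  set r : ℝ := D (k + 1) / D k with hr
  have hDk : 0 < D k := hpos k le_rfl
  have hr0 : 0 < r := div_pos (hpos (k+1) (by omega)) hDk
  have hr1 : r ≤ 1 := (div_le_one hDk).2 hdec
  -- step estimate
  have step : ∀ m : ℕ, D (k + m + 1) ≤ r / β ^ m * D (k + m) := by
    intro m
    induction m with
    | zero =>
      simp only [Nat.add_zero, pow_zero, div_one, hr]
      rw [div_mul_cancel₀ _ (ne_of_gt hDk)]
    | succ m ih =>
      show D (k + m + 1 + 1) ≤ r / β ^ (m + 1) * D (k + m + 1)
      have h := hratio (k + m + 1) (by omega)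
      simp only [Nat.add_sub_cancel] at h
      have h1 : 0 < D (k + m) := hpos _ (by omega)
      have h2 : 0 < D (k + m + 1) := hpos _ (by omega)
      have hpm : (0:ℝ) < β ^ m := pow_pos hb0 m
      have hpm1 : (0:ℝ) < β ^ (m+1) := pow_pos hb0 (m+1)
      have ih' : β ^ m * D (k + m + 1) ≤ r * D (k + m) := by
        rw [div_mul_eq_mul_div, le_div_iff₀ hpm] at ih
        linarith [ih]
      rw [div_mul_eq_mul_div, le_div_iff₀ hpm1, pow_succ]
      nlinarith [mul_le_mul_of_nonneg_left h hpm.le,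
        mul_le_mul_of_nonneg_right ih' h2.le, h1, h2, mul_pos h1 h2]
  -- main claim
  have claim : ∀ m : ℕ, D (k + m) ≤ r ^ m / β ^ (m * (m - 1) / 2) * D k := by
    intro m
    induction m with
    | zero => simp
    | succ m ih =>
      have hpm : (0:ℝ) < β ^ m := pow_pos hb0 m
      have hE : (m + 1) * ((m + 1) - 1) / 2 = m * (m - 1) / 2 + m := by
        rw [← Finset.sum_range_id, ← Finset.sum_range_id, Finset.sum_range_succ]
      calc D (k + m + 1) ≤ r / β ^ m * D (k + m) := step m
        _ ≤ r / β ^ m * (r ^ m / β ^ (m * (m - 1) / 2) * D k) := by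
            apply mul_le_mul_of_nonneg_left ih (by positivity)
        _ = r ^ (m + 1) / β ^ ((m + 1) * ((m + 1) - 1) / 2) * D k := by
            rw [hE, pow_add, pow_succ]
            field_simp
            ring
  have hkey : ∀ m : ℕ, 1 ≤ m → m - 1 ≤ m * (m - 1) / 2 := by
    intro m hm
    rcases Nat.lt_or_ge m 2 with h | h
    · interval_cases m <;> simp
    · rw [Nat.le_div_iff_mul_le (by norm_num)]
      nlinarith
  set a : ℕ → ℝ := fun m => r ^ m / β ^ (m * (m - 1) / 2) with ha
  have hbound : ∀ m, a m ≤ β * (1 / β) ^ m := by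
    intro m
    have h1 : (0:ℝ) < β ^ (m * (m - 1) / 2) := pow_pos hb0 _
    have h2 : (0:ℝ) < β ^ m := pow_pos hb0 m
    rw [ha]
    simp only [one_div, inv_pow]
    rw [div_le_iff₀ h1]
    rw [mul_comm β, mul_assoc]
    have hrm : r ^ m ≤ 1 := pow_le_one₀ hr0.le hr1
    have : β ^ m ≤ β * β ^ (m * (m - 1) / 2) := by
      rcases Nat.eq_zero_or_pos m with rfl | hm
      · simpa using hβ.le
      · calc β ^ m = β * β ^ (m - 1) := by
              rw [← pow_succ']
              congr 1
              omega
          _ ≤ β * β ^ (m * (m - 1) / 2) := by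
              apply mul_le_mul_of_nonneg_left _ hb0.le
              exact pow_le_pow_right₀ hβ.le (hkey m hm)
    calc r ^ m ≤ 1 := hrm
      _ ≤ (β ^ m)⁻¹ * (β * β ^ (m * (m - 1) / 2)) := by
          rw [le_inv_mul_iff₀ h2, mul_one]
          exact this
  have hgeo : Summable (fun m : ℕ => β * (1 / β) ^ m) := by
    apply Summable.mul_left
    apply summable_geometric_of_lt_one (by positivity)
    rw [div_lt_one hb0]; exact hβ
  have hanon : ∀ m, 0 ≤ a m := by
    intro m; rw [ha]; positivity
  have hsumA : Summable a := Summable.of_nonneg_of_le hanon hbound hgeo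
  have hsumAD : Summable (fun m => a m * D k) := hsumA.mul_right _
  have hptwise : ∀ m, D (k + m) ≤ a m * D k := claim
  have hsumD : Summable (fun m => D (k + m)) :=
    Summable.of_nonneg_of_le (fun m => (hpos _ (by omega)).le) hptwise hsumAD
  constructor
  · intro l hl
    obtain ⟨m, rfl⟩ := Nat.exists_eq_add_of_le hl
    simpa using claim m
  · calc (∑' m : ℕ, D (k + m)) ≤ ∑' m : ℕ, a m * D k :=
          Summable.tsum_le_tsum hptwise hsumD hsumAD
      _ = (∑' m : ℕ, a m) * D k := tsum_mul_right
end

section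
/- Let c_0,...,c_N be positive reals with c_j^2 ≥ 4 c_{j+1} c_{j-1} for 1 ≤ j ≤ N−1, and suppose x > 0 satisfies c_k x^k ≥ c_{k+1} x^{k+1} + c_{k-1} x^{k-1} for some 1 ≤ k ≤ N−1. Then sign(Σ_{j=0}^N c_j (−x)^j) = (−1)^k, provided N ≥ 3. -/
open Finset

private lemma geosum4 : ∀ n : ℕ, ∑ m ∈ range n, ((1:ℝ)/4)^(m+1) ≤ 1/3 := by
  intro n
  induction n with
  | zero => norm_num
  | succ n ih =>
    rw [Finset.sum_range_succ']
    have h1 : ∑ m ∈ range n, ((1:ℝ)/4)^(m+1+1) = (1/4) * ∑ m ∈ range n, ((1:ℝ)/4)^(m+1) := by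
      rw [Finset.mul_sum]
      exact Finset.sum_congr rfl fun m _ => by ring
    rw [h1]
    norm_num
    linarith

private lemma alt_lb (b : ℕ → ℝ) (M : ℕ) (hM : 1 ≤ M)
    (hb : ∀ m, m < M → 0 ≤ b m ∧ b m ≤ b 0 * (1/4)^m) :
    2/3 * b 0 ≤ ∑ m ∈ range M, (-1:ℝ)^m * b m := by
  obtain ⟨M', rfl⟩ : ∃ M', M = M' + 1 := ⟨M - 1, by omega⟩
  rw [Finset.sum_range_succ']
  have h0 : 0 ≤ b 0 := (hb 0 (by omega)).1
  have key : ∀ m ∈ range M', -(b 0 * ((1:ℝ)/4)^(m+1)) ≤ (-1:ℝ)^(m+1) * b (m+1) := by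
    intro m hm
    rw [Finset.mem_range] at hm
    obtain ⟨hbp, hble⟩ := hb (m+1) (by omega)
    rcases neg_one_pow_eq_or ℝ (m+1) with h | h <;> rw [h] <;> nlinarith
  have hsum := Finset.sum_le_sum key
  have h2 : ∑ m ∈ range M', -(b 0 * ((1:ℝ)/4)^(m+1)) = -(b 0 * ∑ m ∈ range M', ((1:ℝ)/4)^(m+1)) := by
    rw [Finset.mul_sum, ← Finset.sum_neg_distrib]
  have h3 := geosum4 M'
  rw [h2] at hsum
  have h4 : b 0 * ∑ m ∈ range M', ((1:ℝ)/4)^(m+1) ≤ b 0 * (1/3) :=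
    mul_le_mul_of_nonneg_left h3 h0
  simp only [pow_zero, one_mul]
  linarith


theorem stmt_3 (N : ℕ) (hN : 3 ≤ N) (c : ℕ → ℝ) (hpos : ∀ j ≤ N, 0 < c j)
    (hβ : ∀ j, 1 ≤ j → j ≤ N - 1 → 4 * (c (j + 1) * c (j - 1)) ≤ (c j) ^ 2)
    (x : ℝ) (hx : 0 < x) (k : ℕ) (hk1 : 1 ≤ k) (hk2 : k ≤ N - 1)
    (hmode : c (k + 1) * x ^ (k + 1) + c (k - 1) * x ^ (k - 1) ≤ c k * x ^ k) :
    0 < (-1 : ℝ) ^ k * ∑ j ∈ Finset.range (N + 1), c j * (-x) ^ j := by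
  obtain ⟨K, rfl⟩ : ∃ K, k = K + 1 := ⟨k - 1, by omega⟩
  have hKN : K + 2 ≤ N := by omega
  set a : ℕ → ℝ := fun j => c j * x ^ j with ha
  have apos : ∀ j, j ≤ N → 0 < a j := fun j hj => mul_pos (hpos j hj) (pow_pos hx j)
  have hβa : ∀ i, i + 2 ≤ N → 4 * (a (i+2) * a i) ≤ a (i+1) ^ 2 := by
    intro i hi
    have h := hβ (i+1) (by omega) (by omega)
    simp only [Nat.add_sub_cancel] at h
    have hstep : 4 * (c (i+2) * c i) * (x^(i+1))^2 ≤ c (i+1)^2 * (x^(i+1))^2 :=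
      mul_le_mul_of_nonneg_right h (sq_nonneg _)
    calc 4 * (a (i+2) * a i) = 4 * (c (i+1+1) * c i) * (x^(i+1))^2 := by
          simp only [ha]; ring
      _ ≤ c (i+1)^2 * (x^(i+1))^2 := hstep
      _ = a (i+1)^2 := by simp only [ha]; ring
  have hmode' : a (K+2) + a K ≤ a (K+1) := by
    have e : K + 1 - 1 = K := by omega
    simpa only [ha, e] using hmode
  have quad : ∀ i, i + 2 ≤ N → a (i+1) ≤ a (i+2) → 4 * a i ≤ a (i+1) := by
    intro i hi h2
    have h1 := hβa i hi
    have p1 := apos (i+1) (by omega)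
    have p2 := apos (i+2) (by omega)
    have h7 : (4 * a i) * a (i+2) ≤ a (i+1) * a (i+2) := by nlinarith
    exact le_of_mul_le_mul_right h7 p2
  have quad' : ∀ i, i + 2 ≤ N → a (i+1) ≤ a i → 4 * a (i+2) ≤ a (i+1) := by
    intro i hi h2
    have h1 := hβa i hi
    have p0 := apos i (by omega)
    have p1 := apos (i+1) (by omega)
    have h7 : (4 * a (i+2)) * a i ≤ a (i+1) * a i := by nlinarith
    exact le_of_mul_le_mul_right h7 p0
  have mono_down : ∀ d i, i + d = K → a i ≤ a (i+1) := by
    intro d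
    induction d with
    | zero =>
      intro i hi
      have e : i = K := by omega
      rw [e]
      have := apos (K+2) (by omega)
      linarith [hmode']
    | succ d ih =>
      intro i hi
      have h2 := ih (i+1) (by omega)
      have h4 := quad i (by omega) h2
      have p0 := apos i (by omega)
      linarith
  have step_down : ∀ i, i + 1 ≤ K → 4 * a i ≤ a (i+1) := by
    intro i hi
    exact quad i (by omega) (mono_down (K - (i+1)) (i+1) (by omega))
  have geom_down : ∀ d i, i + d ≤ K → a i * 4^d ≤ a (i+d) := by
    intro d
    induction d with
    | zero => intro i _; simp
    | succ d ih =>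
      intro i hi
      have h1 := ih i (by omega)
      have h2 := step_down (i+d) (by omega)
      calc a i * 4^(d+1) = (a i * 4^d) * 4 := by ring
        _ ≤ a (i+d) * 4 := by nlinarith
        _ ≤ a (i+d+1) := by linarith
  have mono_up : ∀ d, K+2+d ≤ N → a (K+2+d) ≤ a (K+1+d) := by
    intro d
    induction d with
    | zero =>
      intro _
      have := apos K (by omega)
      simpa using by linarith [hmode']
    | succ d ih =>
      intro hd
      have h2 := ih (by omega)
      have h4 := quad' (K+1+d) (by omega) (by
        have e : K+1+d+1 = K+2+d := by omega
        rw [e]; exact h2)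
      have e1 : K+1+d+2 = K+2+(d+1) := by omega
      have e2 : K+1+d+1 = K+1+(d+1) := by omega
      rw [e1, e2] at h4
      have p := apos (K+2+(d+1)) (by omega)
      linarith
  have step_up : ∀ d, K+3+d ≤ N → 4 * a (K+3+d) ≤ a (K+2+d) := by
    intro d hd
    have h2 := mono_up d (by omega)
    have h4 := quad' (K+1+d) (by omega) (by
      have e : K+1+d+1 = K+2+d := by omega
      rw [e]; exact h2)
    have e1 : K+1+d+2 = K+3+d := by omega
    have e2 : K+1+d+1 = K+2+d := by omega
    rw [e1, e2] at h4
    exact h4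
  have geom_up : ∀ d, K+3+d ≤ N → a (K+3+d) * 4^d ≤ a (K+3) := by
    intro d
    induction d with
    | zero => intro _; simp
    | succ d ih =>
      intro hd
      have h2 := step_up (d+1) (by omega)
      have e : K+2+(d+1) = K+3+d := by omega
      rw [e] at h2
      have h1 := ih (by omega)
      have e2 : K+3+(d+1) = K+3+d+1 := by omega
      rw [e2] at h2 ⊢
      have hp : (0:ℝ) ≤ 4^d := by positivity
      calc a (K+3+d+1) * 4^(d+1) = (4 * a (K+3+d+1)) * 4^d := by ring
        _ ≤ a (K+3+d) * 4^d := mul_le_mul_of_nonneg_right h2 hp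
        _ ≤ a (K+3) := h1
  have hT : (-1:ℝ)^(K+1) * ∑ j ∈ range (N+1), c j * (-x)^j
      = ∑ j ∈ range (N+1), (-1:ℝ)^(j+K+1) * a j := by
    rw [Finset.mul_sum]
    refine Finset.sum_congr rfl fun j _ => ?_
    have hnp : (-x)^j = (-1:ℝ)^j * x^j := by rw [neg_pow]
    rw [hnp]
    simp only [ha]
    ring
  rw [hT]
  set f : ℕ → ℝ := fun j => (-1:ℝ)^(j+K+1) * a j with hf
  have hsplit : ∑ j ∈ range (N+1), f j
      = (∑ j ∈ range K, f j) + f K + f (K+1) + f (K+2) + ∑ j ∈ Ico (K+3) (N+1), f j := by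
    have h1 : ∑ j ∈ range (K+3), f j + ∑ j ∈ Ico (K+3) (N+1), f j = ∑ j ∈ range (N+1), f j := by
      simp only [Finset.range_eq_Ico]
      exact Finset.sum_Ico_consecutive f (by omega) (by omega)
    rw [← h1, Finset.sum_range_succ, Finset.sum_range_succ, Finset.sum_range_succ]
  rw [hsplit]
  have efK : f K = -a K := by
    have h : ((-1:ℝ))^(K+K+1) = -1 := Odd.neg_one_pow ⟨K, by omega⟩
    simp only [hf, h]; ring
  have efK1 : f (K+1) = a (K+1) := by
    have h : ((-1:ℝ))^(K+1+K+1) = 1 := Even.neg_one_pow ⟨K+1, by omega⟩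
    simp only [hf, h]; ring
  have efK2 : f (K+2) = -a (K+2) := by
    have h : ((-1:ℝ))^(K+2+K+1) = -1 := Odd.neg_one_pow ⟨K+1, by omega⟩
    simp only [hf, h]; ring
  have hD : 0 ≤ ∑ j ∈ range K, f j ∧ (1 ≤ K → 0 < ∑ j ∈ range K, f j) := by
    rcases Nat.eq_zero_or_pos K with h | h
    · subst h; simp
    · have hrefl : ∑ j ∈ range K, f j = ∑ m ∈ range K, (-1:ℝ)^m * a (K-1-m) := by
        rw [← Finset.sum_range_reflect (fun m => (-1:ℝ)^m * a (K-1-m)) K]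
        refine Finset.sum_congr rfl fun j hj => ?_
        rw [Finset.mem_range] at hj
        have e1 : K - 1 - (K - 1 - j) = j := by omega
        have hsgn : ((-1:ℝ))^(j+K+1) = (-1:ℝ)^(K-1-j) := by
          have e2 : j + K + 1 = 2*(j+1) + (K-1-j) := by omega
          rw [e2, pow_add, pow_mul]; norm_num
        simp only [hf, e1, hsgn]
      have hb : ∀ m, m < K → 0 ≤ a (K-1-m) ∧ a (K-1-m) ≤ a (K-1-0) * (1/4:ℝ)^m := by
        intro m hm
        have p := apos (K-1-m) (by omega)
        refine ⟨p.le, ?_⟩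
        have hg := geom_down m (K-1-m) (by omega)
        have e : K-1-m+m = K-1 := by omega
        rw [e] at hg
        have h4 : (0:ℝ) < 4^m := by positivity
        have e3 : a (K-1-0) * ((1:ℝ)/4)^m = a (K-1) / 4^m := by
          rw [Nat.sub_zero, one_div, inv_pow, div_eq_mul_inv]
        rw [e3, le_div_iff₀ h4]
        exact hg
      have halt := alt_lb (fun m => a (K-1-m)) K h hb
      have pK1 := apos (K-1-0) (by omega)
      rw [hrefl]
      constructor
      · linarith
      · intro _; linarith
  have hU : 0 ≤ ∑ j ∈ Ico (K+3) (N+1), f j ∧ (K+3 ≤ N → 0 < ∑ j ∈ Ico (K+3) (N+1), f j) := by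
    rcases le_or_gt (N+1) (K+3) with h | h
    · rw [Finset.Ico_eq_empty (by omega)]
      simp
      omega
    · have hre : ∑ j ∈ Ico (K+3) (N+1), f j
          = ∑ m ∈ range (N+1-(K+3)), (-1:ℝ)^m * a (K+3+m) := by
        rw [Finset.sum_Ico_eq_sum_range]
        refine Finset.sum_congr rfl fun m hm => ?_
        have hsgn : ((-1:ℝ))^(K+3+m+K+1) = (-1:ℝ)^m := by
          have e2 : K+3+m+K+1 = 2*(K+2) + m := by omega
          rw [e2, pow_add, pow_mul]; norm_num
        simp only [hf, hsgn]
      have hb : ∀ m, m < N+1-(K+3) → 0 ≤ a (K+3+m) ∧ a (K+3+m) ≤ a (K+3+0) * (1/4:ℝ)^m := by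
        intro m hm
        have p := apos (K+3+m) (by omega)
        refine ⟨p.le, ?_⟩
        have hg := geom_up m (by omega)
        have h4 : (0:ℝ) < 4^m := by positivity
        have e3 : a (K+3+0) * ((1:ℝ)/4)^m = a (K+3) / 4^m := by
          rw [Nat.add_zero, one_div, inv_pow, div_eq_mul_inv]
        rw [e3, le_div_iff₀ h4]
        exact hg
      have halt := alt_lb (fun m => a (K+3+m)) (N+1-(K+3)) (by omega) hb
      have pU := apos (K+3+0) (by omega)
      rw [hre]
      constructor
      · linarith
      · intro _; linarith
  rw [efK, efK1, efK2]
  rcases Nat.eq_zero_or_pos K with hK0 | hK1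
  · have hUU := hU.2 (by omega)
    have hDD := hD.1
    linarith [hmode']
  · have hDD := hD.2 hK1
    have hUU := hU.1
    linarith [hmode']
end

section
/- For every ε > 0 and every N ≥ 5, there exists a real polynomial p of degree N with all coefficients positive such that c_j^2/(c_{j+1}c_{j-1}) > 1 + √2 − ε for all 1 ≤ j ≤ N−1, yet p has a root z with |arg z| = 3π/4. -/
set_option maxHeartbeats 1000000

lemma aux_j1 (a ε t : ℝ) (haL : 2 < a) (haU : a < 2.5) (hε : 0 < ε)
    (ht0 : 0 < t) (ht1 : t ≤ 1/1000) (htε : 1000 * t ≤ ε) (ht4 : t^4 ≤ t) :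
    (a - ε) * ((a + a * t + t ^ 4) * 1) < (a + t) ^ 2 := by
  have ha0 : (0:ℝ) ≤ a := by linarith
  nlinarith [mul_le_mul htε haL.le (by norm_num : (0:ℝ) ≤ 2) hε.le,
    mul_nonneg hε.le ht0.le, mul_nonneg ht0.le ht0.le,
    mul_nonneg hε.le (pow_nonneg ht0.le 4), mul_nonneg ha0 ht0.le]

lemma aux_j2 (a ε t q3 : ℝ) (haL : 2 < a) (haU : a < 2.5) (hε : 0 < ε)
    (ht0 : 0 < t) (ht1 : t ≤ 1/1000) (htε : 1000 * t ≤ ε) (ht4 : t^4 ≤ t)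
    (hq30 : 0 ≤ q3) (hq3 : q3 ≤ t^4) (hεa : 0 < a - ε) :
    (a - ε) * ((1 + a * t ^ 4 + a * t + q3) * (a + t)) < (a + a * t + t ^ 4) ^ 2 := by
  have ha0 : (0:ℝ) ≤ a := by linarith
  have e3 : (1 + a * t ^ 4 + a * t + q3 : ℝ) ≤ 1 + 7 * t := by nlinarith
  have e4 : (a - ε) * ((1 + 7 * t) * (a + t)) < a ^ 2 := by
    nlinarith [mul_le_mul htε haL.le (by norm_num : (0:ℝ) ≤ 2) hε.le,
      mul_nonneg hε.le ht0.le,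
      mul_nonneg (mul_nonneg hε.le ha0) ht0.le,
      mul_nonneg hε.le (mul_nonneg ht0.le ht0.le),
      mul_nonneg ht0.le ht0.le, mul_nonneg ha0 (mul_nonneg ht0.le ht0.le)]
  have e5 : (a - ε) * ((1 + a * t ^ 4 + a * t + q3) * (a + t))
      ≤ (a - ε) * ((1 + 7 * t) * (a + t)) := by
    apply mul_le_mul_of_nonneg_left _ hεa.le
    apply mul_le_mul_of_nonneg_right e3 (by linarith)
  nlinarith [mul_nonneg ha0 ht0.le]

lemma aux_j3 (a ε t q3 q4 : ℝ) (haL : 2 < a) (haU : a < 2.5) (hε : 0 < ε)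
    (ht0 : 0 < t) (ht1 : t ≤ 1/1000) (htε : 1000 * t ≤ ε) (ht4 : t^4 ≤ t)
    (hq30 : 0 ≤ q3) (hq3 : q3 ≤ t^4) (hq40 : 0 ≤ q4) (hq4 : q4 ≤ t^4) (hεa : 0 < a - ε) :
    (a - ε) * ((t + a * q3 + a * t ^ 4 + q4) * (a + a * t + t ^ 4)) <
      (1 + a * t ^ 4 + a * t + q3) ^ 2 := by
  have ha0 : (0:ℝ) ≤ a := by linarith
  have e6 : (t + a * q3 + a * t ^ 4 + q4 : ℝ) ≤ 7 * t := by nlinarith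
  have e7 : (a + a * t + t ^ 4 : ℝ) ≤ 3 := by nlinarith
  have e8 : (1:ℝ) ≤ 1 + a * t ^ 4 + a * t + q3 := by
    nlinarith [mul_nonneg ha0 ht0.le, mul_nonneg ha0 (pow_nonneg ht0.le 4)]
  have e9 : (a - ε) * ((t + a * q3 + a * t ^ 4 + q4) * (a + a * t + t ^ 4))
      ≤ 2.5 * ((7 * t) * 3) := by
    apply mul_le_mul (by linarith) _ _ (by norm_num)
    · apply mul_le_mul e6 e7 (by nlinarith [mul_nonneg ha0 ht0.le, pow_nonneg ht0.le 4]) (by linarith)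
    · have h0 : (0:ℝ) ≤ t + a * q3 + a * t ^ 4 + q4 := by
        nlinarith [mul_nonneg ha0 hq30, mul_nonneg ha0 (pow_nonneg ht0.le 4)]
      have h0' : (0:ℝ) ≤ a + a * t + t ^ 4 := by
        nlinarith [mul_nonneg ha0 ht0.le, pow_nonneg ht0.le 4]
      exact mul_nonneg h0 h0'
  nlinarith [e9]

lemma aux_j4 (a t : ℝ) (haL : 2 < a) (haU : a < 2.5)
    (ht0 : 0 < t) (ht1 : t ≤ 1/1000) :
    2.5 * ((2 * a + 2) ^ 2 * (t * t)) ≤ 1 / 2 := by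
  have h1 : (2 * a + 2) ^ 2 ≤ 49 := by nlinarith
  have h2 : t * t ≤ 1/1000 * (1/1000) := by nlinarith
  have := mul_le_mul h1 h2 (mul_nonneg ht0.le ht0.le) (by norm_num)
  nlinarith [this]

set_option maxHeartbeats 2000000

open Polynomial Finset

theorem stmt_10 (ε : ℝ) (hε : 0 < ε) (N : ℕ) (hN : 5 ≤ N) :
    ∃ c : ℕ → ℝ, (∀ j ≤ N, 0 < c j) ∧
      (∀ j, 1 ≤ j → j ≤ N - 1 →
        1 + Real.sqrt 2 - ε < (c j) ^ 2 / (c (j + 1) * c (j - 1))) ∧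
      ∃ z : ℂ, (∑ j ∈ Finset.range (N + 1), (c j : ℂ) * z ^ j) = 0 ∧
        |z.arg| = 3 * Real.pi / 4 := by
  have hπ := Real.pi_pos
  set s := Real.sqrt 2 with hs
  have hs2 : s ^ 2 = 2 := Real.sq_sqrt (by norm_num)
  have hs0 : (0:ℝ) ≤ s := Real.sqrt_nonneg 2
  have hsl : s < 1.5 := by nlinarith
  have hsg : 1 < s := by nlinarith
  set a : ℝ := 1 + s with ha
  have haL : 2 < a := by rw [ha]; linarith
  have haU : a < 2.5 := by rw [ha]; linarith
  have ha0 : (0:ℝ) ≤ a := by linarith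
  obtain ⟨M, rfl⟩ : ∃ M, N = M + 3 := ⟨N - 3, by omega⟩
  have hM2 : 2 ≤ M := by omega
  set t : ℝ := min ε 1 / 1000 with htdef
  have htm : 0 < min ε 1 := lt_min hε one_pos
  have ht0 : 0 < t := by rw [htdef]; positivity
  have ht1 : t ≤ 1 / 1000 := by
    have : min ε 1 ≤ 1 := min_le_right _ _
    rw [htdef]; linarith
  have htε : 1000 * t ≤ ε := by
    have : min ε 1 ≤ ε := min_le_left _ _
    rw [htdef]; linarith
  have ht1' : t ≤ 1 := by linarith
  -- the coefficient function of the auxiliary factor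
  set q : ℕ → ℝ := fun k => if k ≤ M then t ^ (k ^ 2) else 0 with hq
  have hq0 : ∀ k, 0 ≤ q k := by
    intro k; simp only [hq]; split_ifs
    · positivity
    · exact le_rfl
  have hqpos : ∀ k, k ≤ M → 0 < q k := by
    intro k hk; simp only [hq, if_pos hk]; positivity
  have hqeq : ∀ m, m ≤ M → q m = t ^ (m ^ 2) := by
    intro m hm; simp only [hq, if_pos hm]
  have hqmono : ∀ k l : ℕ, k ≤ l → q l ≤ q k := by
    intro k l hkl
    simp only [hq]
    split_ifs with h1 h2 h2
    · exact pow_le_pow_of_le_one ht0.le ht1' (Nat.pow_le_pow_left hkl 2)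
    · exact absurd (le_trans hkl h1) h2
    · positivity
    · exact le_rfl
  have hq00 : q 0 = 1 := by simp [hq, Nat.zero_le]
  have hq11 : q 1 = t := by
    simp only [hq, if_pos (by omega : 1 ≤ M)]; norm_num
  have hq22 : q 2 = t ^ 4 := by
    simp only [hq, if_pos (by omega : 2 ≤ M)]; norm_num
  set Q : Polynomial ℝ := ∑ k ∈ Finset.range (M + 1), Polynomial.monomial k (t ^ (k ^ 2)) with hQ
  have hQc : ∀ k, Q.coeff k = q k := by
    intro k
    simp only [hQ, Polynomial.finset_sum_coeff, Polynomial.coeff_monomial]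
    rw [Finset.sum_ite_eq' (Finset.range (M+1)) k (fun i => t ^ (i ^ 2))]
    simp only [hq, Finset.mem_range]
    by_cases h : k ≤ M
    · rw [if_pos (by omega), if_pos h]
    · rw [if_neg (by omega), if_neg h]
  have hQdeg : Q.natDegree ≤ M := by
    apply Polynomial.natDegree_sum_le_of_forall_le
    intro i hi
    exact le_trans (Polynomial.natDegree_monomial_le _)
      (Nat.lt_succ_iff.mp (Finset.mem_range.mp hi))
  set P : Polynomial ℝ := Q * Polynomial.X ^ 3 + Polynomial.C a * (Q * Polynomial.X ^ 2)
      + Polynomial.C a * (Q * Polynomial.X ^ 1) + Q with hP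
  have hPc : ∀ j, P.coeff j =
      (if 3 ≤ j then q (j - 3) else 0) + a * (if 2 ≤ j then q (j - 2) else 0)
      + a * (if 1 ≤ j then q (j - 1) else 0) + q j := by
    intro j
    simp only [hP, Polynomial.coeff_add, Polynomial.coeff_C_mul,
      Polynomial.coeff_mul_X_pow', hQc]
  -- uniform upper bound
  have hub : ∀ j, P.coeff j ≤ (2 * a + 2) * q (j - 3) := by
    intro j
    rw [hPc]
    have h1 : (if 3 ≤ j then q (j - 3) else 0) ≤ q (j - 3) := by
      split_ifs; exacts [le_rfl, hq0 _]
    have h2 : a * (if 2 ≤ j then q (j - 2) else 0) ≤ a * q (j - 3) := by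
      split_ifs with h
      · exact mul_le_mul_of_nonneg_left (hqmono _ _ (by omega)) ha0
      · simpa using mul_nonneg ha0 (hq0 (j - 3))
    have h3 : a * (if 1 ≤ j then q (j - 1) else 0) ≤ a * q (j - 3) := by
      split_ifs with h
      · exact mul_le_mul_of_nonneg_left (hqmono _ _ (by omega)) ha0
      · simpa using mul_nonneg ha0 (hq0 (j - 3))
    have h4 : q j ≤ q (j - 3) := hqmono _ _ (by omega)
    linarith
  -- lower bound for j ≥ 3
  have hlb : ∀ j, 3 ≤ j → q (j - 3) ≤ P.coeff j := by
    intro j hj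
    rw [hPc, if_pos hj]
    have h2 : 0 ≤ a * (if 2 ≤ j then q (j - 2) else 0) := by
      split_ifs; exacts [mul_nonneg ha0 (hq0 _), by simp]
    have h3 : 0 ≤ a * (if 1 ≤ j then q (j - 1) else 0) := by
      split_ifs; exacts [mul_nonneg ha0 (hq0 _), by simp]
    have h4 := hq0 j
    linarith
  -- positivity of all coefficients
  have hpos : ∀ j, j ≤ M + 3 → 0 < P.coeff j := by
    intro j hj
    by_cases h3 : 3 ≤ j
    · exact lt_of_lt_of_le (hqpos _ (by omega)) (hlb j h3)
    · rw [hPc]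
      have h2 : 0 ≤ a * (if 2 ≤ j then q (j - 2) else 0) := by
        split_ifs; exacts [mul_nonneg ha0 (hq0 _), by simp]
      have h2' : 0 ≤ a * (if 1 ≤ j then q (j - 1) else 0) := by
        split_ifs; exacts [mul_nonneg ha0 (hq0 _), by simp]
      have h4 : 0 < q j := hqpos _ (by omega)
      rw [if_neg h3]
      linarith
  -- explicit small coefficients
  have hc0 : P.coeff 0 = 1 := by rw [hPc]; norm_num [hq00]
  have hc1 : P.coeff 1 = a + t := by rw [hPc]; norm_num [hq00, hq11]
  have hc2 : P.coeff 2 = a + a * t + t ^ 4 := by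
    rw [hPc]; norm_num [hq00, hq11, hq22]; try ring
  have hc3 : P.coeff 3 = 1 + a * t ^ 4 + a * t + q 3 := by
    rw [hPc]; norm_num [hq00, hq11, hq22]; try ring
  have hc4 : P.coeff 4 = t + a * q 3 + a * t ^ 4 + q 4 := by
    rw [hPc]; norm_num [hq11, hq22]; try ring
  have hq3 : q 3 ≤ t ^ 4 := hq22 ▸ hqmono 2 3 (by omega)
  have hq4 : q 4 ≤ t ^ 4 := hq22 ▸ hqmono 2 4 (by omega)
  have hq30 : 0 ≤ q 3 := hq0 3
  have hq40 : 0 ≤ q 4 := hq0 4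
  have ht4 : t ^ 4 ≤ t := by
    calc t ^ 4 ≤ t ^ 1 := pow_le_pow_of_le_one ht0.le ht1' (by norm_num)
      _ = t := pow_one t
  clear_value P Q q
  refine ⟨fun j => P.coeff j, fun j hj => hpos j hj, ?_, ?_⟩
  · -- the β inequalities
    intro j hj1 hj2
    dsimp only
    have hj2' : j ≤ M + 2 := by omega
    have hd1 : 0 < P.coeff (j + 1) := hpos _ (by omega)
    have hd2 : 0 < P.coeff (j - 1) := hpos _ (by omega)
    have hdj : 0 < P.coeff j := hpos _ (by omega)
    rw [lt_div_iff₀ (mul_pos hd1 hd2)]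
    have haε : 1 + s - ε = a - ε := by rw [ha]
    rw [haε]
    rcases le_or_gt a ε with hcase | hcase
    · calc (a - ε) * (P.coeff (j+1) * P.coeff (j-1))
          ≤ 0 := mul_nonpos_of_nonpos_of_nonneg (by linarith) (mul_pos hd1 hd2).le
        _ < P.coeff j ^ 2 := by positivity
    have hεa : 0 < a - ε := by linarith
    rcases Nat.lt_or_ge j 4 with hj4 | hj4
    · interval_cases j
      · -- j = 1
        rw [show (1:ℕ) - 1 = 0 from rfl, hc0, hc1, hc2]
        exact aux_j1 a ε t haL haU hε ht0 ht1 htε ht4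
      · -- j = 2
        rw [show (2:ℕ) - 1 = 1 from rfl, hc1, hc2, hc3]
        exact aux_j2 a ε t (q 3) haL haU hε ht0 ht1 htε ht4 hq30 hq3 hεa
      · -- j = 3
        rw [show (3:ℕ) - 1 = 2 from rfl, hc2, hc3, hc4]
        exact aux_j3 a ε t (q 3) (q 4) haL haU hε ht0 ht1 htε ht4 hq30 hq3 hq40 hq4 hεa
    · -- j ≥ 4
      obtain ⟨k, rfl⟩ : ∃ k, j = k + 4 := ⟨j - 4, by omega⟩
      have hkM : k + 2 ≤ M := by omega
      have l1 : P.coeff (k + 5) ≤ (2 * a + 2) * t ^ ((k + 2) ^ 2) := by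
        have := hub (k + 5)
        rwa [show k + 5 - 3 = k + 2 by omega, hqeq _ hkM] at this
      have l2 : P.coeff (k + 3) ≤ (2 * a + 2) * t ^ (k ^ 2) := by
        have := hub (k + 3)
        rwa [show k + 3 - 3 = k by omega, hqeq _ (by omega)] at this
      have l3 : t ^ ((k + 1) ^ 2) ≤ P.coeff (k + 4) := by
        have := hlb (k + 4) (by omega)
        rwa [show k + 4 - 3 = k + 1 by omega, hqeq _ (by omega)] at this
      have hTpos : (0:ℝ) < t ^ ((k + 1) ^ 2) := pow_pos ht0 _
      have key : t ^ ((k + 2) ^ 2) * t ^ (k ^ 2)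
          = t ^ ((k + 1) ^ 2) * t ^ ((k + 1) ^ 2) * (t * t) := by
        have h : (k + 2) ^ 2 + k ^ 2 = (k + 1) ^ 2 + (k + 1) ^ 2 + 2 := by ring
        rw [← pow_add, h, pow_add, pow_add]; ring
      have hpos5 : 0 < P.coeff (k + 5) := hpos _ (by omega)
      have hpos3 : 0 < P.coeff (k + 3) := hpos _ (by omega)
      have hpos4 : 0 < P.coeff (k + 4) := hpos _ (by omega)
      have m1 : P.coeff (k + 5) * P.coeff (k + 3)
          ≤ (2 * a + 2) ^ 2 * (t ^ ((k + 1) ^ 2) * t ^ ((k + 1) ^ 2) * (t * t)) := by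
        calc P.coeff (k + 5) * P.coeff (k + 3)
            ≤ ((2 * a + 2) * t ^ ((k + 2) ^ 2)) * ((2 * a + 2) * t ^ (k ^ 2)) := by
              apply mul_le_mul l1 l2 hpos3.le (mul_nonneg (by linarith) (pow_nonneg ht0.le _))
          _ = (2 * a + 2) ^ 2 * (t ^ ((k + 2) ^ 2) * t ^ (k ^ 2)) := by ring
          _ = _ := by rw [key]
      have m2 : t ^ ((k + 1) ^ 2) * t ^ ((k + 1) ^ 2) ≤ P.coeff (k + 4) * P.coeff (k + 4) :=
        mul_le_mul l3 l3 hTpos.le hpos4.le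
      have hA : 2.5 * ((2 * a + 2) ^ 2 * (t * t)) ≤ 1 / 2 := aux_j4 a t haL haU ht0 ht1
      have hfix1 : k + 4 + 1 = k + 5 := by omega
      have hfix2 : k + 4 - 1 = k + 3 := by omega
      rw [hfix1, hfix2]
      calc (a - ε) * (P.coeff (k + 5) * P.coeff (k + 3))
          ≤ 2.5 * ((2 * a + 2) ^ 2 * (t ^ ((k + 1) ^ 2) * t ^ ((k + 1) ^ 2) * (t * t))) := by
            apply mul_le_mul (by linarith) m1 (mul_pos hpos5 hpos3).le (by norm_num)
        _ = (2.5 * ((2 * a + 2) ^ 2 * (t * t))) * (t ^ ((k + 1) ^ 2) * t ^ ((k + 1) ^ 2)) := by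
            ring
        _ ≤ (1 / 2) * (t ^ ((k + 1) ^ 2) * t ^ ((k + 1) ^ 2)) := by
            apply mul_le_mul_of_nonneg_right (by linarith) (mul_nonneg (pow_nonneg ht0.le _) (pow_nonneg ht0.le _))
        _ < 1 * (t ^ ((k + 1) ^ 2) * t ^ ((k + 1) ^ 2)) := by
            have := mul_pos hTpos hTpos
            linarith
        _ = t ^ ((k + 1) ^ 2) * t ^ ((k + 1) ^ 2) := one_mul _
        _ ≤ P.coeff (k + 4) * P.coeff (k + 4) := m2
        _ = P.coeff (k + 4) ^ 2 := (sq (P.coeff (k + 4))).symm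
  · -- the root
    set θ : ℝ := 3 * Real.pi / 4 with hθ
    have hcosv : Real.cos θ = -(s / 2) := by
      have h34 : θ = Real.pi - Real.pi / 4 := by rw [hθ]; ring
      rw [h34, Real.cos_pi_sub, Real.cos_pi_div_four, hs]
    have hsinv : Real.sin θ = s / 2 := by
      have h34 : θ = Real.pi - Real.pi / 4 := by rw [hθ]; ring
      rw [h34, Real.sin_pi_sub, Real.sin_pi_div_four, hs]
    set z₀ : ℂ := (Real.cos θ : ℂ) + (Real.sin θ : ℂ) * Complex.I with hz₀
    have hz₀' : z₀ = -((s:ℂ) / 2) + ((s:ℂ) / 2) * Complex.I := by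
      rw [hz₀, hcosv, hsinv]; push_cast; ring
    have hsC : ((s:ℝ):ℂ) ^ 2 = 2 := by
      rw [← Complex.ofReal_pow, hs2]; norm_num
    have hroot : z₀ ^ 2 + (s:ℂ) * z₀ + 1 = 0 := by
      rw [hz₀']
      linear_combination ((Complex.I ^ 2 - 1) / 4) * hsC + (1 / 2 : ℂ) * Complex.I_sq
    have hcubic : z₀ ^ 3 + (a:ℂ) * z₀ ^ 2 + (a:ℂ) * z₀ + 1 = 0 := by
      have haC : ((a:ℝ):ℂ) = 1 + (s:ℂ) := by rw [ha]; push_cast; ring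
      rw [haC]
      linear_combination (z₀ + 1) * hroot
    have hPdeg : P.natDegree < M + 3 + 1 := by
      have h1 : (Q * Polynomial.X ^ 3).natDegree ≤ M + 3 :=
        le_trans Polynomial.natDegree_mul_le
          (by rw [Polynomial.natDegree_X_pow]; omega)
      have h2 : (Polynomial.C a * (Q * Polynomial.X ^ 2)).natDegree ≤ M + 3 :=
        le_trans (Polynomial.natDegree_C_mul_le _ _)
          (le_trans Polynomial.natDegree_mul_le
            (by rw [Polynomial.natDegree_X_pow]; omega))
      have h3 : (Polynomial.C a * (Q * Polynomial.X ^ 1)).natDegree ≤ M + 3 :=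
        le_trans (Polynomial.natDegree_C_mul_le _ _)
          (le_trans Polynomial.natDegree_mul_le
            (by rw [Polynomial.natDegree_X_pow]; omega))
      have h4 : Q.natDegree ≤ M + 3 := by omega
      have : P.natDegree ≤ M + 3 := by
        rw [hP]
        refine le_trans (Polynomial.natDegree_add_le _ _) (max_le ?_ h4)
        refine le_trans (Polynomial.natDegree_add_le _ _) (max_le ?_ h3)
        exact le_trans (Polynomial.natDegree_add_le _ _) (max_le h1 h2)
      omega
    have hsum : (Polynomial.aeval z₀) P
        = ∑ i ∈ Finset.range (M + 3 + 1), P.coeff i • z₀ ^ i :=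
      Polynomial.aeval_eq_sum_range' hPdeg z₀
    have haevalP : (Polynomial.aeval z₀) P = 0 := by
      have : (Polynomial.aeval z₀) P
          = (Polynomial.aeval z₀) Q * (z₀ ^ 3 + (a:ℂ) * z₀ ^ 2 + (a:ℂ) * z₀ + 1) := by
        simp only [hP, map_add, map_mul, map_pow, Polynomial.aeval_X, Polynomial.aeval_C,
          Complex.coe_algebraMap]
        ring
      rw [this, hcubic, mul_zero]
    refine ⟨z₀, ?_, ?_⟩
    · dsimp only
      calc (∑ j ∈ Finset.range (M + 3 + 1), (P.coeff j : ℂ) * z₀ ^ j)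
          = ∑ i ∈ Finset.range (M + 3 + 1), P.coeff i • z₀ ^ i := by
            refine Finset.sum_congr rfl fun i _ => ?_
            rw [Complex.real_smul]
        _ = (Polynomial.aeval z₀) P := hsum.symm
        _ = 0 := haevalP
    · have harg : z₀.arg = θ := by
        rw [hz₀, Complex.ofReal_cos, Complex.ofReal_sin]
        exact Complex.arg_cos_add_sin_mul_I ⟨by rw [hθ]; linarith, by rw [hθ]; linarith⟩
      rw [harg, hθ]
      exact abs_of_nonneg (by positivity)
end

section
/- Fix r, s with 0 ≤ s ≤ r ≤ 1 and rs ≤ 1/β for some β > 0, and fix ψ ∈ (0, π/4]. If β ≥ max{4cos²ψ, 1 + 2cos ψ}, then r sin ψ + s sin 3ψ ≤ sin 2ψ. -/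
set_option maxHeartbeats 1000000

theorem stmt_13 (r s β ψ : ℝ) (hs : 0 ≤ s) (hsr : s ≤ r) (hr : r ≤ 1)
    (hβ : 0 < β) (hrs : r * s ≤ 1 / β)
    (hψ1 : 0 < ψ) (hψ2 : ψ ≤ Real.pi / 4)
    (hβ2 : max (4 * Real.cos ψ ^ 2) (1 + 2 * Real.cos ψ) ≤ β) :
    r * Real.sin ψ + s * Real.sin (3 * ψ) ≤ Real.sin (2 * ψ) := by
  set c := Real.cos ψ with hc
  set σ := Real.sin ψ with hσ
  have hβ2a : 4 * c ^ 2 ≤ β := le_trans (le_max_left _ _) hβ2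
  have hβ2b : 1 + 2 * c ≤ β := le_trans (le_max_right _ _) hβ2
  have hσpos : 0 < σ := Real.sin_pos_of_pos_of_lt_pi hψ1
    (lt_of_le_of_lt hψ2 (by linarith [Real.pi_pos]))
  have hpyth : σ ^ 2 + c ^ 2 = 1 := Real.sin_sq_add_cos_sq ψ
  have hcge : Real.sqrt 2 / 2 ≤ c := by
    have := Real.cos_le_cos_of_nonneg_of_le_pi (le_of_lt hψ1)
      (by linarith [Real.pi_pos]) hψ2
    rwa [Real.cos_pi_div_four] at this
  have hc2 : 1 / 2 ≤ c ^ 2 := by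
    nlinarith [Real.sq_sqrt (by norm_num : (0:ℝ) ≤ 2), Real.sqrt_nonneg 2]
  have hcpos : (1:ℝ)/2 < c := by
    nlinarith [Real.sq_sqrt (by norm_num : (0:ℝ) ≤ 2), Real.sqrt_nonneg 2]
  have hc1 : c ≤ 1 := Real.cos_le_one ψ
  have ha : (0:ℝ) ≤ 4 * c ^ 2 - 1 := by linarith
  have h3 : Real.sin (3 * ψ) = σ * (4 * c ^ 2 - 1) := by
    rw [Real.sin_three_mul]; linear_combination (-4 * σ) * hpyth
  have h2ψ : Real.sin (2 * ψ) = 2 * σ * c := Real.sin_two_mul ψ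
  rw [h3, h2ψ]
  have hrs' : β * (r * s) ≤ 1 := by
    rw [div_eq_inv_mul, mul_one] at hrs
    calc β * (r * s) ≤ β * β⁻¹ := mul_le_mul_of_nonneg_left hrs (le_of_lt hβ)
      _ = 1 := mul_inv_cancel₀ (ne_of_gt hβ)
  -- key inequality: r + s * (4c²-1) ≤ 2c
  have key : r + s * (4 * c ^ 2 - 1) ≤ 2 * c := by
    rcases le_or_gt (β * s) 1 with hcase | hcase
    · -- s ≤ 1/β : linear bound via (1,1/β) vertex
      have h1 : 0 ≤ (1 - β * s) * (4 * c ^ 2 - 1) :=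
        mul_nonneg (by linarith) ha
      have h2 : 0 ≤ (β - (1 + 2 * c)) * (2 * c - 1) :=
        mul_nonneg (by linarith) (by linarith)
      have h4 : 0 ≤ β * (1 - r) := mul_nonneg hβ.le (by linarith)
      nlinarith [h1, h2, h4, hβ]
    · -- s > 1/β : quadratic bound
      have hspos : 0 < s := by
        rcases hs.lt_or_eq with h | h
        · exact h
        · exfalso; rw [← h] at hcase; simp at hcase; linarith
      set u := Real.sqrt β with hu
      have hu2 : u ^ 2 = β := Real.sq_sqrt (le_of_lt hβ)
      have hupos : 0 < u := Real.sqrt_pos.mpr hβ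
      have hu1 : 1 < u := by
        rw [hu]; exact (Real.lt_sqrt (by norm_num)).mpr (by nlinarith)
      have huc : 2 * c ≤ u := by
        rw [hu]; exact (Real.le_sqrt (by linarith) hβ.le).mpr (by nlinarith)
      have hβs2 : β * s ^ 2 ≤ 1 := by
        have h5 := mul_nonneg (mul_nonneg hβ.le hs) (sub_nonneg.mpr hsr)
        nlinarith [h5, hrs']
      have hsu : u * s ≤ 1 := by
        have hq : (u * s) ^ 2 ≤ 1 := by
          calc (u * s) ^ 2 = u ^ 2 * s ^ 2 := by ring
            _ = β * s ^ 2 := by rw [hu2]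
            _ ≤ 1 := hβs2
        nlinarith [hq, mul_pos hupos hspos]
      have hscase : 1 < u ^ 2 * s := by rw [hu2]; exact hcase
      have hH1 : 0 ≤ (u^2*s - 1) * (1 - u*s) * (u - 1) * (4*c^2 - 1) := by
        apply mul_nonneg (mul_nonneg (mul_nonneg _ _) _) ha <;> linarith
      have hH2 : 0 ≤ (1 - u*s) * (2*c*u^2 - u^2 - (4*c^2 - 1)) := by
        apply mul_nonneg (by linarith)
        have h2 : 0 ≤ (u^2 - (1 + 2 * c)) * (2 * c - 1) := by
          apply mul_nonneg _ (by linarith)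
          rw [hu2]; linarith
        nlinarith [h2]
      have hH3 : 0 ≤ (u^2*s - 1) * (2*c*u^2 - 4*c^2*u) := by
        apply mul_nonneg (by linarith)
        have := mul_nonneg (mul_nonneg (by linarith : (0:ℝ) ≤ 2 * c) hupos.le)
          (by linarith : (0:ℝ) ≤ u - 2 * c)
        nlinarith [this]
      have hpos : 0 < u * (u - 1) := mul_pos hupos (by linarith)
      have hid : u*(u-1) * (2*c*u^2*s - (4*c^2-1)*u^2*s^2 - 1)
          = (u^2*s - 1) * (1 - u*s) * (u - 1) * (4*c^2 - 1)
            + (1 - u*s) * (2*c*u^2 - u^2 - (4*c^2 - 1))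
            + (u^2*s - 1) * (2*c*u^2 - 4*c^2*u) := by ring
      have hX : 0 ≤ 2*c*u^2*s - (4*c^2-1)*u^2*s^2 - 1 := by
        nlinarith [hid, hH1, hH2, hH3, hpos]
      have hT : 0 ≤ 2*c*β*s - (4*c^2-1)*β*s^2 - 1 := by
        rw [← hu2]; linarith [hX]
      nlinarith [hT, hrs', mul_pos hβ hspos]
  nlinarith [mul_le_mul_of_nonneg_left key (le_of_lt hσpos)]
end

section
/- Let a = 2cos ψ with 0 < ψ < π/2 and let b > 0 satisfy (a+b)³ = (1 + ab + b)². Then the degree-5 polynomial k(z) = (z² − az + 1)(1 + bz + bz² + z³) has all ratios c_j²/(c_{j+1}c_{j-1}) of its coefficients equal to β := (a+b)^{1/2}, has e^{i(π−ψ)} as a root, and β satisfies β³ − (1+a)β² − 1 + a + a² = 0. -/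
/-- Coefficients of `k = (z² + az + 1)(1 + bz + bz² + z³)`. -/
def stmt14c (a b : ℝ) : ℕ → ℝ := fun j =>
  if j = 0 then 1 else if j = 1 then a + b
  else if j = 2 then 1 + b + a * b else if j = 3 then 1 + b + a * b
  else if j = 4 then a + b else if j = 5 then 1 else 0

theorem stmt_14 (ψ b : ℝ) (hψ1 : 0 < ψ) (hψ2 : ψ < Real.pi / 2) (hb : 0 < b)
    (hrel : (2 * Real.cos ψ + b) ^ 3 = (1 + 2 * Real.cos ψ * b + b) ^ 2) :
    (∀ z : ℂ,
      (z ^ 2 + ((2 * Real.cos ψ : ℝ) : ℂ) * z + 1) *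
        (1 + (b : ℂ) * z + (b : ℂ) * z ^ 2 + z ^ 3) =
      ∑ j ∈ Finset.range 6, ((stmt14c (2 * Real.cos ψ) b j : ℝ) : ℂ) * z ^ j) ∧
    (∑ j ∈ Finset.range 6, ((stmt14c (2 * Real.cos ψ) b j : ℝ) : ℂ) *
        (Complex.exp (((Real.pi - ψ : ℝ) : ℂ) * Complex.I)) ^ j) = 0 ∧
    (∀ j, 1 ≤ j → j ≤ 4 →
      (stmt14c (2 * Real.cos ψ) b j) ^ 2 /
        (stmt14c (2 * Real.cos ψ) b (j + 1) * stmt14c (2 * Real.cos ψ) b (j - 1)) =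
      Real.sqrt (2 * Real.cos ψ + b)) ∧
    (Real.sqrt (2 * Real.cos ψ + b)) ^ 3 -
        (1 + 2 * Real.cos ψ) * (Real.sqrt (2 * Real.cos ψ + b)) ^ 2 -
        1 + 2 * Real.cos ψ + (2 * Real.cos ψ) ^ 2 = 0 := by
  set a : ℝ := 2 * Real.cos ψ with ha_def
  have hcos : 0 < Real.cos ψ := Real.cos_pos_of_mem_Ioo ⟨by linarith [Real.pi_pos], hψ2⟩
  have ha : 0 < a := by positivity
  have hab : 0 < a + b := by linarith
  have habb : 0 < 1 + a * b + b := by positivity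
  set β : ℝ := Real.sqrt (a + b) with hβ_def
  have hβpos : 0 < β := Real.sqrt_pos.mpr hab
  have hβ2 : β ^ 2 = a + b := Real.sq_sqrt hab.le
  have hβ3 : β ^ 3 = 1 + a * b + b := by
    have h1 : (β ^ 3) ^ 2 = (1 + a * b + b) ^ 2 := by
      calc (β ^ 3) ^ 2 = (β ^ 2) ^ 3 := by ring
        _ = (a + b) ^ 3 := by rw [hβ2]
        _ = (1 + a * b + b) ^ 2 := by linear_combination hrel
    have h2 : 0 ≤ β ^ 3 := by positivity
    nlinarith [h1, h2, habb]
  have hexpand : ∀ z : ℂ,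
      (z ^ 2 + ((a : ℝ) : ℂ) * z + 1) *
        (1 + (b : ℂ) * z + (b : ℂ) * z ^ 2 + z ^ 3) =
      ∑ j ∈ Finset.range 6, ((stmt14c a b j : ℝ) : ℂ) * z ^ j := by
    intro z
    simp only [Finset.sum_range_succ, Finset.sum_range_zero, stmt14c]
    norm_num
    push_cast
    ring
  refine ⟨hexpand, ?_, ?_, ?_⟩
  · rw [← hexpand]
    have hroot : (Complex.exp (((Real.pi - ψ : ℝ) : ℂ) * Complex.I)) ^ 2 +
        ((a : ℝ) : ℂ) * Complex.exp (((Real.pi - ψ : ℝ) : ℂ) * Complex.I) + 1 = 0 := by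
      have hz : Complex.exp (((Real.pi - ψ : ℝ) : ℂ) * Complex.I) =
          -Complex.exp (-(ψ : ℂ) * Complex.I) := by
        have : ((Real.pi - ψ : ℝ) : ℂ) * Complex.I =
            (Real.pi : ℂ) * Complex.I + (-(ψ : ℂ) * Complex.I) := by push_cast; ring
        rw [this, Complex.exp_add, Complex.exp_pi_mul_I]; ring
      have hcosc : ((a : ℝ) : ℂ) =
          Complex.exp ((ψ : ℂ) * Complex.I) + Complex.exp (-(ψ : ℂ) * Complex.I) := by
        rw [ha_def]
        push_cast
        rw [Complex.cos]
        ring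
      rw [hz, hcosc]
      have hmul : Complex.exp ((ψ : ℂ) * Complex.I) * Complex.exp (-(ψ : ℂ) * Complex.I) = 1 := by
        rw [← Complex.exp_add]; norm_num
      linear_combination -hmul
    rw [hroot]
    ring
  · have key1 : β * (a + b) = 1 + a * b + b := by
      rw [← hβ2]; rw [show β * β ^ 2 = β ^ 3 by ring, hβ3]
    have key2 : β * (1 + a * b + b) = (a + b) ^ 2 := by
      rw [← hβ3, ← hβ2]; ring
    have hpos2 : (0:ℝ) < 1 + b + a * b := by linarith [habb]
    intro j hj1 hj4
    interval_cases j
    · simp only [stmt14c]; norm_num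
      rw [div_eq_iff (ne_of_gt hpos2)]
      linear_combination -key2
    · simp only [stmt14c]; norm_num
      rw [div_eq_iff (ne_of_gt (mul_pos hpos2 hab))]
      linear_combination -(1 + b + a * b) * key1
    · simp only [stmt14c]; norm_num
      rw [div_eq_iff (ne_of_gt (mul_pos hab hpos2))]
      linear_combination -(1 + b + a * b) * key1
    · simp only [stmt14c]; norm_num
      rw [div_eq_iff (ne_of_gt hpos2)]
      linear_combination -key2
  · nlinarith [hβ2, hβ3]
end

section
/- Let b > √3, let l ≥ 3 be odd, and N ≥ 2l (possibly N = ∞). Suppose f_{b,l}(−x) ≥ 0 for all x ∈ (0, b⁴), where f_{b,l}(x) = Σ_{j=0}^l x^j b^{−j(j+1)}. Then f_{b,N}(−x) > 0 for all x ∈ (0, b⁴), where f_{b,N}(x) = Σ_{j=0}^N x^j b^{−j(j+1)}. -/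
lemma alt_pos_aux (a : ℕ → ℝ) (hpos : ∀ k, 0 < a k) (hdec : ∀ k, a (k+1) < a k) :
    ∀ n, 0 < ∑ k ∈ Finset.range (n+1), (-1:ℝ)^k * a k ∧
      (Even n → a n ≤ ∑ k ∈ Finset.range (n+1), (-1:ℝ)^k * a k) := by
  intro n
  induction n with
  | zero => simp [le_of_lt (hpos 0), hpos 0]
  | succ m ih =>
    rw [Finset.sum_range_succ]
    rcases Nat.even_or_odd m with he | ho
    · have h1 := ih.2 he
      have hsign : ((-1:ℝ))^(m+1) = -1 := Odd.neg_one_pow (Even.add_one he)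
      have h2 := hdec m
      constructor
      · rw [hsign]; nlinarith [hpos (m+1)]
      · intro hev
        exact absurd hev (by simp [Nat.even_add_one, Nat.not_even_iff_odd,
          Even.add_one he, Nat.odd_iff, Nat.even_iff] at *; omega)
    · have hsign : ((-1:ℝ))^(m+1) = 1 := Even.neg_one_pow (Odd.add_one ho)
      have h1 := ih.1
      constructor
      · rw [hsign]; nlinarith [hpos (m+1)]
      · intro _; rw [hsign]; nlinarith

theorem stmt_19 (b : ℝ) (hb : Real.sqrt 3 < b) (l : ℕ) (hl : 3 ≤ l) (hodd : Odd l)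
    (N : ℕ) (hN : 2 * l ≤ N)
    (h : ∀ x : ℝ, 0 < x → x < b ^ 4 →
      0 ≤ ∑ j ∈ Finset.range (l + 1), (-x) ^ j / b ^ (j * (j + 1))) :
    ∀ x : ℝ, 0 < x → x < b ^ 4 →
      0 < ∑ j ∈ Finset.range (N + 1), (-x) ^ j / b ^ (j * (j + 1)) := by
  intro x hx hx4
  have h1 : (1:ℝ) < Real.sqrt 3 := by
    rw [show (1:ℝ) = Real.sqrt 1 from (Real.sqrt_one).symm]
    exact Real.sqrt_lt_sqrt (by norm_num) (by norm_num)
  have hb1 : (1:ℝ) < b := h1.trans hb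
  have hbpos : (0:ℝ) < b := by linarith
  set a : ℕ → ℝ := fun k => x^(l+1+k) / b^((l+1+k)*(l+2+k)) with ha
  have hpos : ∀ k, 0 < a k := by
    intro k; exact div_pos (pow_pos hx _) (pow_pos hbpos _)
  have hdec : ∀ k, a (k+1) < a k := by
    intro k
    set m := l + 1 + k with hm
    have hexp : (l+1+(k+1)) * (l+2+(k+1)) = m*(m+1) + (2*m+2) := by rw [hm]; ring
    have hexp2 : (l+1+k)*(l+2+k) = m*(m+1) := by rw [hm]; ring
    have hxlt : x < b^(2*m+2) := by
      calc x < b^4 := hx4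
        _ ≤ b^(2*m+2) := pow_le_pow_right₀ (le_of_lt hb1) (by omega)
    show x^(m+1) / b^((l+1+(k+1)) * (l+2+(k+1))) < x^m / b^((l+1+k)*(l+2+k))
    rw [hexp, hexp2]
    rw [div_lt_div_iff₀ (by positivity) (by positivity)]
    have hxm : 0 < x^m := pow_pos hx m
    have hbm : 0 < b^(m*(m+1)) := pow_pos hbpos _
    calc x^(m+1) * b^(m*(m+1)) = x^m * x * b^(m*(m+1)) := by rw [pow_succ]
      _ < x^m * b^(2*m+2) * b^(m*(m+1)) := by
          exact mul_lt_mul_of_pos_right (mul_lt_mul_of_pos_left hxlt hxm) hbm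
      _ = x^m * b^(m*(m+1) + (2*m+2)) := by rw [pow_add]; ring
  have hlN : l + 1 ≤ N := by omega
  have hsplit : N + 1 = (l+1) + (N - l) := by omega
  rw [hsplit, Finset.sum_range_add]
  have hhead := h x hx hx4
  have htermeq : ∀ k, (-x) ^ (l+1+k) / b ^ ((l+1+k) * (l+1+k+1)) = (-1:ℝ)^k * a k := by
    intro k
    have hsgn : (-x) ^ (l+1+k) = (-1:ℝ)^k * x^(l+1+k) := by
      rw [show (-x) = (-1) * x by ring, mul_pow, pow_add, pow_add,
        Odd.neg_one_pow hodd]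
      ring
    rw [hsgn, show (l+1+k)*(l+1+k+1) = (l+1+k)*(l+2+k) by ring]
    unfold a
    ring
  have htail : 0 < ∑ k ∈ Finset.range (N - l), (-x) ^ (l+1+k) / b ^ ((l+1+k) * (l+1+k+1)) := by
    have : ∑ k ∈ Finset.range (N - l), (-x) ^ (l+1+k) / b ^ ((l+1+k) * (l+1+k+1))
        = ∑ k ∈ Finset.range (N - l), (-1:ℝ)^k * a k :=
      Finset.sum_congr rfl (fun k _ => htermeq k)
    rw [this, show N - l = (N - l - 1) + 1 by omega]
    exact (alt_pos_aux a hpos hdec (N - l - 1)).1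
  linarith
end
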